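/- arXiv:2405.09516 — 6 statements merged into one kernel-verified Lean document; each statement's English description precedes it below -/
import Mathlib

section
/- On a probability space (Ω, F, P), let X : Ω → 𝒳, U : Ω → 𝒰, and Y : Ω → ℝ be measurable random variables, let A ∈ F be an event with p := P(A) > 0, and let e := E[1_A | σ(X,U)]. Assume Y and 1_A are conditionally independent given σ(X,U). Let ℓ : ℝ × ℝ → [0,∞) be measurable, h : 𝒳 → ℝ measurable, and let w : 𝒳 → [0,∞) be a bounded measurable weight with E[w(X) | A] = 1. Write L := ℓ(Y, h(X)), assume L is P-square-integrable, and assume Δ := E[(w(X)·e/p − 1)²] < ∞. Then for every λ > 0, E[L] ≤ E[w(X)·L | A] + λ·Δ + Var(L)/(4λ). -/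
open MeasureTheory ProbabilityTheory

section Aux
variable {Ω 𝓧 𝓤 : Type*} [mΩ : MeasurableSpace Ω] [StandardBorelSpace Ω]
    [MeasurableSpace 𝓧] [MeasurableSpace 𝓤]

lemma key_measure_eq (P : Measure Ω) [IsProbabilityMeasure P]
    (X : Ω → 𝓧) (U : Ω → 𝓤) (Y : Ω → ℝ)
    (hX : Measurable X) (hU : Measurable U) (hY : Measurable Y)
    (A : Set Ω) (hA : MeasurableSet A)
    (e : Ω → ℝ)
    (he : e = P[A.indicator (fun _ => (1 : ℝ)) |
      MeasurableSpace.comap (fun ω => (X ω, U ω)) inferInstance])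
    (hind : CondIndepFun (MeasurableSpace.comap (fun ω => (X ω, U ω)) inferInstance)
      ((hX.prodMk hU).comap_le) Y (A.indicator fun _ => (1 : ℝ)) P) :
    (P.restrict A).map (fun ω => (Y ω, (X ω, U ω)))
      = (P.withDensity (fun ω => ENNReal.ofReal (e ω))).map (fun ω => (Y ω, (X ω, U ω))) := by
  have hm : MeasurableSpace.comap (fun ω => (X ω, U ω)) inferInstance ≤ mΩ :=
    (hX.prodMk hU).comap_le
  haveI : SigmaFinite (P.trim hm) := by infer_instance
  have hVm : Measurable (fun ω => (X ω, U ω)) := hX.prodMk hU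
  have hZ : Measurable (fun ω => (Y ω, (X ω, U ω))) := hY.prodMk hVm
  have heSM : StronglyMeasurable[MeasurableSpace.comap (fun ω => (X ω, U ω)) inferInstance] e :=
    he ▸ stronglyMeasurable_condExp
  have heMeas : Measurable e := (heSM.mono hm).measurable
  have heInt : Integrable e P := he ▸ integrable_condExp
  have he0 : 0 ≤ᵐ[P] e := by
    rw [he]
    exact condExp_nonneg (ae_of_all _ fun ω => Set.indicator_nonneg (fun _ _ => zero_le_one) ω)
  have hpre : (A.indicator (fun _ => (1 : ℝ))) ⁻¹' {(0:ℝ)}ᶜ = A := by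
    ext ω; by_cases hω : ω ∈ A <;> simp [Set.indicator_of_mem, Set.indicator_of_notMem, hω]
  -- rectangle identity (real version)
  have hrect : ∀ s : Set ℝ, ∀ t : Set (𝓧 × 𝓤), MeasurableSet s → MeasurableSet t →
      (P ((Y ⁻¹' s ∩ (fun ω => (X ω, U ω)) ⁻¹' t) ∩ A)).toReal
        = ∫ ω, Set.indicator (Y ⁻¹' s ∩ (fun ω => (X ω, U ω)) ⁻¹' t) (fun _ => (1:ℝ)) ω * e ω ∂P := by
    intro s t hs ht
    have htm : MeasurableSet[MeasurableSpace.comap (fun ω => (X ω, U ω)) inferInstance]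
        ((fun ω => (X ω, U ω)) ⁻¹' t) := ⟨t, ht, rfl⟩
    have htm0 : MeasurableSet ((fun ω => (X ω, U ω)) ⁻¹' t) := hm _ htm
    have hsm0 : MeasurableSet (Y ⁻¹' s) := hY hs
    have hmul := (condIndepFun_iff_condExp_inter_preimage_eq_mul hY
      (measurable_const.indicator hA)).mp hind s ({(0:ℝ)}ᶜ) hs (measurableSet_singleton 0).compl
    rw [hpre] at hmul
    have hmul' : P⟦Y ⁻¹' s ∩ A | MeasurableSpace.comap (fun ω => (X ω, U ω)) inferInstance⟧
        =ᵐ[P] fun ω => (P⟦Y ⁻¹' s | MeasurableSpace.comap (fun ω => (X ω, U ω)) inferInstance⟧) ω * e ω := by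
      refine hmul.trans ?_
      rw [he]
    have hsets : (Y ⁻¹' s ∩ (fun ω => (X ω, U ω)) ⁻¹' t) ∩ A
        = ((fun ω => (X ω, U ω)) ⁻¹' t) ∩ (Y ⁻¹' s ∩ A) := by
      ext ω; simp only [Set.mem_inter_iff]; tauto
    have hBint : Integrable ((Y ⁻¹' s ∩ A).indicator (fun _ => (1:ℝ))) P :=
      (integrable_const 1).indicator (hsm0.inter hA)
    have hfInt : Integrable ((Y ⁻¹' s).indicator (fun _ => (1:ℝ))) P :=
      (integrable_const 1).indicator hsm0
    have hψSM : StronglyMeasurable[MeasurableSpace.comap (fun ω => (X ω, U ω)) inferInstance]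
        (fun ω => ((fun ω => (X ω, U ω)) ⁻¹' t).indicator (fun _ => (1:ℝ)) ω * e ω) :=
      (stronglyMeasurable_const.indicator htm).mul heSM
    have hψfInt : Integrable ((fun ω => ((fun ω => (X ω, U ω)) ⁻¹' t).indicator (fun _ => (1:ℝ)) ω * e ω)
        * (Y ⁻¹' s).indicator (fun _ => (1:ℝ))) P := by
      have h1 : Integrable (fun ω => (((fun ω => (X ω, U ω)) ⁻¹' t).indicator (fun _ => (1:ℝ)) ω
          * (Y ⁻¹' s).indicator (fun _ => (1:ℝ)) ω) * e ω) P := by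
        refine heInt.bdd_mul (c := 1)
          (((measurable_const.indicator htm0).mul
            (measurable_const.indicator hsm0)).aestronglyMeasurable) ?_
        refine ae_of_all _ fun ω => ?_
        rw [Real.norm_eq_abs, abs_mul]
        have b1 : |Set.indicator ((fun ω => (X ω, U ω)) ⁻¹' t) (fun _ => (1:ℝ)) ω| ≤ 1 := by
          by_cases hω : ω ∈ (fun ω => (X ω, U ω)) ⁻¹' t <;> simp [hω]
        have b2 : |Set.indicator (Y ⁻¹' s) (fun _ => (1:ℝ)) ω| ≤ 1 := by
          by_cases hω : ω ∈ Y ⁻¹' s <;> simp [hω]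
        calc |Set.indicator ((fun ω => (X ω, U ω)) ⁻¹' t) (fun _ => (1:ℝ)) ω|
              * |Set.indicator (Y ⁻¹' s) (fun _ => (1:ℝ)) ω|
            ≤ 1 * 1 := mul_le_mul b1 b2 (abs_nonneg _) zero_le_one
          _ = 1 := by norm_num
      exact h1.congr (ae_of_all _ fun ω => by simp [Pi.mul_apply]; ring)
    have hpull := condExp_mul_of_stronglyMeasurable_left hψSM hψfInt hfInt
    calc (P ((Y ⁻¹' s ∩ (fun ω => (X ω, U ω)) ⁻¹' t) ∩ A)).toReal
        = ∫ ω in (fun ω => (X ω, U ω)) ⁻¹' t, (Y ⁻¹' s ∩ A).indicator (fun _ => (1:ℝ)) ω ∂P := by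
          rw [setIntegral_indicator (hsm0.inter hA), setIntegral_const, smul_eq_mul, mul_one, hsets, measureReal_def]
      _ = ∫ ω in (fun ω => (X ω, U ω)) ⁻¹' t,
            (P⟦Y ⁻¹' s ∩ A | MeasurableSpace.comap (fun ω => (X ω, U ω)) inferInstance⟧) ω ∂P :=
          (setIntegral_condExp hm hBint htm).symm
      _ = ∫ ω in (fun ω => (X ω, U ω)) ⁻¹' t,
            (P⟦Y ⁻¹' s | MeasurableSpace.comap (fun ω => (X ω, U ω)) inferInstance⟧) ω * e ω ∂P :=
          integral_congr_ae (ae_restrict_of_ae hmul')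
      _ = ∫ ω, ((fun ω => (X ω, U ω)) ⁻¹' t).indicator
            (fun ω => (P⟦Y ⁻¹' s | MeasurableSpace.comap (fun ω => (X ω, U ω)) inferInstance⟧) ω * e ω) ω ∂P :=
          (integral_indicator htm0).symm
      _ = ∫ ω, ((fun ω => (X ω, U ω)) ⁻¹' t).indicator (fun _ => (1:ℝ)) ω * e ω
            * (P⟦Y ⁻¹' s | MeasurableSpace.comap (fun ω => (X ω, U ω)) inferInstance⟧) ω ∂P := by
          refine integral_congr_ae (ae_of_all _ fun ω => ?_)
          by_cases hω : ω ∈ (fun ω => (X ω, U ω)) ⁻¹' t <;>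
            simp [Set.indicator_of_mem, Set.indicator_of_notMem, hω] <;> ring
      _ = ∫ ω, ((fun ω => ((fun ω => (X ω, U ω)) ⁻¹' t).indicator (fun _ => (1:ℝ)) ω * e ω)
            * fun ω => (P[((Y ⁻¹' s).indicator (fun _ => (1:ℝ))) |
              MeasurableSpace.comap (fun ω => (X ω, U ω)) inferInstance]) ω) ω ∂P := rfl
      _ = ∫ ω, ((fun ω => ((fun ω => (X ω, U ω)) ⁻¹' t).indicator (fun _ => (1:ℝ)) ω * e ω)
            * (Y ⁻¹' s).indicator (fun _ => (1:ℝ))) ω ∂P := by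
          rw [integral_congr_ae hpull.symm, integral_condExp hm]
      _ = ∫ ω, Set.indicator (Y ⁻¹' s ∩ (fun ω => (X ω, U ω)) ⁻¹' t) (fun _ => (1:ℝ)) ω * e ω ∂P := by
          refine integral_congr_ae (ae_of_all _ fun ω => ?_)
          by_cases h1 : ω ∈ Y ⁻¹' s <;> by_cases h2 : ω ∈ (fun ω => (X ω, U ω)) ⁻¹' t <;>
            simp [Set.indicator_of_mem, Set.indicator_of_notMem, h1, h2, Set.mem_inter_iff] <;> ring
  haveI hfinwd : IsFiniteMeasure (P.withDensity (fun ω => ENNReal.ofReal (e ω))) := by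
    constructor
    rw [withDensity_apply _ MeasurableSet.univ, Measure.restrict_univ,
      ← ofReal_integral_eq_lintegral_ofReal heInt he0]
    exact ENNReal.ofReal_lt_top
  haveI : IsFiniteMeasure ((P.restrict A).map (fun ω => (Y ω, (X ω, U ω)))) :=
    Measure.isFiniteMeasure_map _ _
  refine ext_of_generate_finite _ generateFrom_prod.symm isPiSystem_prod ?_ ?_
  · rintro _ ⟨s, hs, t, ht, rfl⟩
    simp only [Set.mem_setOf_eq] at hs ht
    have hB : MeasurableSet (Y ⁻¹' s ∩ (fun ω => (X ω, U ω)) ⁻¹' t) := (hY hs).inter (hVm ht)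
    rw [Measure.map_apply hZ (hs.prod ht), Measure.map_apply hZ (hs.prod ht),
      Set.mk_preimage_prod, Measure.restrict_apply hB, withDensity_apply _ hB]
    have h1 : ∫⁻ ω in Y ⁻¹' s ∩ (fun ω => (X ω, U ω)) ⁻¹' t, ENNReal.ofReal (e ω) ∂P
        = ENNReal.ofReal (∫ ω in Y ⁻¹' s ∩ (fun ω => (X ω, U ω)) ⁻¹' t, e ω ∂P) :=
      (ofReal_integral_eq_lintegral_ofReal heInt.integrableOn (ae_restrict_of_ae he0)).symm
    have h2 : ∫ ω in Y ⁻¹' s ∩ (fun ω => (X ω, U ω)) ⁻¹' t, e ω ∂P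
        = ∫ ω, Set.indicator (Y ⁻¹' s ∩ (fun ω => (X ω, U ω)) ⁻¹' t) (fun _ => (1:ℝ)) ω * e ω ∂P := by
      rw [← integral_indicator hB]
      refine integral_congr_ae (ae_of_all _ fun ω => ?_)
      by_cases hω : ω ∈ Y ⁻¹' s ∩ (fun ω => (X ω, U ω)) ⁻¹' t <;> simp [hω]
    rw [h1, h2, ← hrect s t hs ht, ENNReal.ofReal_toReal (measure_ne_top _ _)]
  · have huniv := hrect Set.univ Set.univ MeasurableSet.univ MeasurableSet.univ
    simp only [Set.preimage_univ, Set.univ_inter, Set.indicator_univ] at huniv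
    rw [Measure.map_apply hZ MeasurableSet.univ, Measure.map_apply hZ MeasurableSet.univ,
      Set.preimage_univ, Measure.restrict_apply MeasurableSet.univ, Set.univ_inter,
      withDensity_apply _ MeasurableSet.univ, Measure.restrict_univ,
      ← ofReal_integral_eq_lintegral_ofReal heInt he0, ← ENNReal.ofReal_toReal (measure_ne_top P A),
      huniv]
    congr 1
    exact integral_congr_ae (ae_of_all _ fun ω => one_mul _)
lemma key_integral (P : Measure Ω) [IsProbabilityMeasure P]
    (X : Ω → 𝓧) (U : Ω → 𝓤) (Y : Ω → ℝ)
    (hX : Measurable X) (hU : Measurable U) (hY : Measurable Y)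
    (A : Set Ω) (hA : MeasurableSet A)
    (e : Ω → ℝ)
    (he : e = P[A.indicator (fun _ => (1 : ℝ)) |
      MeasurableSpace.comap (fun ω => (X ω, U ω)) inferInstance])
    (hind : CondIndepFun (MeasurableSpace.comap (fun ω => (X ω, U ω)) inferInstance)
      ((hX.prodMk hU).comap_le) Y (A.indicator fun _ => (1 : ℝ)) P)
    (F : ℝ × (𝓧 × 𝓤) → ℝ) (hF : Measurable F) (hF0 : ∀ z, 0 ≤ F z)
    (hint1 : Integrable (fun ω => F (Y ω, (X ω, U ω)) * A.indicator (fun _ => (1:ℝ)) ω) P)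
    (hint2 : Integrable (fun ω => F (Y ω, (X ω, U ω)) * e ω) P) :
    ∫ ω, F (Y ω, (X ω, U ω)) * A.indicator (fun _ => (1:ℝ)) ω ∂P
      = ∫ ω, F (Y ω, (X ω, U ω)) * e ω ∂P := by
  have hmap := key_measure_eq P X U Y hX hU hY A hA e he hind
  have hm : MeasurableSpace.comap (fun ω => (X ω, U ω)) inferInstance ≤ mΩ :=
    (hX.prodMk hU).comap_le
  have heSM : StronglyMeasurable[MeasurableSpace.comap (fun ω => (X ω, U ω)) inferInstance] e :=
    he ▸ stronglyMeasurable_condExp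
  have heMeas : Measurable e := (heSM.mono hm).measurable
  have he0 : 0 ≤ᵐ[P] e := by
    rw [he]
    exact condExp_nonneg (ae_of_all _ fun ω => Set.indicator_nonneg (fun _ _ => zero_le_one) ω)
  have hZ : Measurable (fun ω => (Y ω, (X ω, U ω))) := hY.prodMk (hX.prodMk hU)
  have hind1 : (fun ω => F (Y ω, (X ω, U ω)) * A.indicator (fun _ => (1:ℝ)) ω)
      = A.indicator (fun ω => F (Y ω, (X ω, U ω))) := by
    funext ω; by_cases hω : ω ∈ A <;> simp [hω]
  have hIOn : IntegrableOn (fun ω => F (Y ω, (X ω, U ω))) A P :=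
    (integrable_indicator_iff hA).mp (hind1 ▸ hint1)
  have key : ENNReal.ofReal (∫ ω, F (Y ω, (X ω, U ω)) * A.indicator (fun _ => (1:ℝ)) ω ∂P)
      = ENNReal.ofReal (∫ ω, F (Y ω, (X ω, U ω)) * e ω ∂P) := by
    calc ENNReal.ofReal (∫ ω, F (Y ω, (X ω, U ω)) * A.indicator (fun _ => (1:ℝ)) ω ∂P)
        = ENNReal.ofReal (∫ ω in A, F (Y ω, (X ω, U ω)) ∂P) := by
          rw [hind1, integral_indicator hA]
      _ = ∫⁻ ω, ENNReal.ofReal (F (Y ω, (X ω, U ω))) ∂(P.restrict A) :=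
          ofReal_integral_eq_lintegral_ofReal hIOn (ae_of_all _ fun ω => hF0 _)
      _ = ∫⁻ z, ENNReal.ofReal (F z) ∂((P.restrict A).map (fun ω => (Y ω, (X ω, U ω)))) :=
          (lintegral_map (ENNReal.measurable_ofReal.comp hF) hZ).symm
      _ = ∫⁻ z, ENNReal.ofReal (F z)
            ∂((P.withDensity (fun ω => ENNReal.ofReal (e ω))).map (fun ω => (Y ω, (X ω, U ω)))) := by
          rw [hmap]
      _ = ∫⁻ ω, ENNReal.ofReal (F (Y ω, (X ω, U ω))) ∂(P.withDensity (fun ω => ENNReal.ofReal (e ω))) :=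
          lintegral_map (ENNReal.measurable_ofReal.comp hF) hZ
      _ = ∫⁻ ω, ((fun ω => ENNReal.ofReal (e ω)) * fun ω => ENNReal.ofReal (F (Y ω, (X ω, U ω)))) ω ∂P :=
          lintegral_withDensity_eq_lintegral_mul P heMeas.ennreal_ofReal
            ((ENNReal.measurable_ofReal.comp hF).comp hZ)
      _ = ∫⁻ ω, ENNReal.ofReal (F (Y ω, (X ω, U ω)) * e ω) ∂P := by
          refine lintegral_congr fun ω => ?_
          simp only [Pi.mul_apply]
          rw [ENNReal.ofReal_mul (hF0 _), mul_comm]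
      _ = ENNReal.ofReal (∫ ω, F (Y ω, (X ω, U ω)) * e ω ∂P) :=
          (ofReal_integral_eq_lintegral_ofReal hint2 (by
            filter_upwards [he0] with ω h using mul_nonneg (hF0 _) h)).symm
  have h1 : 0 ≤ ∫ ω, F (Y ω, (X ω, U ω)) * A.indicator (fun _ => (1:ℝ)) ω ∂P :=
    integral_nonneg fun ω => mul_nonneg (hF0 _) (Set.indicator_nonneg (fun _ _ => zero_le_one) ω)
  have h2 : 0 ≤ ∫ ω, F (Y ω, (X ω, U ω)) * e ω ∂P :=
    integral_nonneg_of_ae (by filter_upwards [he0] with ω h using mul_nonneg (hF0 _) h)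
  exact (ENNReal.ofReal_eq_ofReal_iff h1 h2).mp key

end Aux


/-- upper bound on the outcome regression loss in expectation,
Theorem 2 of the paper. Under conditional independence of `Y` and `1_A` given
`σ(X,U)`, for a nonnegative measurable loss `ℓ`, measurable `h`, and a bounded
nonnegative weight `w` with `E[w(X) | A] = 1`, writing `L = ℓ(Y, h(X))`
(square-integrable) and `Δ = E[(w(X)·e/p − 1)²] < ∞`, for every `λ > 0` we have
`E[L] ≤ E[w(X)·L | A] + λ·Δ + Var(L)/(4λ)`. -/
theorem stmt_3 {Ω 𝓧 𝓤 : Type*} [MeasurableSpace Ω] [StandardBorelSpace Ω]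
    [MeasurableSpace 𝓧] [MeasurableSpace 𝓤]
    (P : Measure Ω) [IsProbabilityMeasure P]
    (X : Ω → 𝓧) (U : Ω → 𝓤) (Y : Ω → ℝ)
    (hX : Measurable X) (hU : Measurable U) (hY : Measurable Y)
    (A : Set Ω) (hA : MeasurableSet A)
    (p : ℝ) (hp : p = (P A).toReal) (hppos : 0 < p)
    (e : Ω → ℝ)
    (he : e = P[A.indicator (fun _ => (1 : ℝ)) |
      MeasurableSpace.comap (fun ω => (X ω, U ω)) inferInstance])
    (hind : CondIndepFun (MeasurableSpace.comap (fun ω => (X ω, U ω)) inferInstance)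
      ((hX.prodMk hU).comap_le) Y (A.indicator fun _ => (1 : ℝ)) P)
    (ℓ : ℝ × ℝ → ℝ) (hℓm : Measurable ℓ) (hℓ0 : ∀ z, 0 ≤ ℓ z)
    (h : 𝓧 → ℝ) (hh : Measurable h)
    (w : 𝓧 → ℝ) (hwm : Measurable w) (hw0 : ∀ x, 0 ≤ w x) (Cw : ℝ) (hwb : ∀ x, w x ≤ Cw)
    (hw1 : (∫ ω, w (X ω) * A.indicator (fun _ => (1 : ℝ)) ω ∂P) / p = 1)
    (L : Ω → ℝ) (hL : L = fun ω => ℓ (Y ω, h (X ω))) (hL2 : MemLp L 2 P)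
    (Δ : ℝ) (hΔ : Δ = ∫ ω, (w (X ω) * e ω / p - 1) ^ 2 ∂P)
    (hΔfin : Integrable (fun ω => (w (X ω) * e ω / p - 1) ^ 2) P)
    (lam : ℝ) (hlam : 0 < lam) :
    ∫ ω, L ω ∂P
      ≤ (∫ ω, w (X ω) * L ω * A.indicator (fun _ => (1 : ℝ)) ω ∂P) / p
        + lam * Δ + variance L P / (4 * lam) := by
  have hm : MeasurableSpace.comap (fun ω => (X ω, U ω)) inferInstance
      ≤ (inferInstance : MeasurableSpace Ω) := (hX.prodMk hU).comap_le
  have heSM : StronglyMeasurable[MeasurableSpace.comap (fun ω => (X ω, U ω)) inferInstance] e :=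
    he ▸ stronglyMeasurable_condExp
  have heMeas : Measurable e := (heSM.mono hm).measurable
  have heInt : Integrable e P := he ▸ integrable_condExp
  have he0 : 0 ≤ᵐ[P] e := by
    rw [he]
    exact condExp_nonneg (ae_of_all _ fun ω => Set.indicator_nonneg (fun _ _ => zero_le_one) ω)
  have he1 : e ≤ᵐ[P] fun _ => 1 := by
    rw [he]
    have h1 := condExp_mono (m := MeasurableSpace.comap (fun ω => (X ω, U ω)) inferInstance)
      (μ := P) ((integrable_const (1:ℝ)).indicator hA) (integrable_const (1:ℝ))
      (ae_of_all _ fun ω => Set.indicator_le_self' (fun _ _ => zero_le_one) ω)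
    have h2 : (P[(fun _ => (1:ℝ)) | MeasurableSpace.comap (fun ω => (X ω, U ω)) inferInstance])
        = fun _ => (1:ℝ) := condExp_const hm 1
    rw [h2] at h1
    exact h1
  have hLint : Integrable L P := hL2.integrable one_le_two
  have hLm : Measurable (fun ω => ℓ (Y ω, h (X ω))) := hℓm.comp (hY.prodMk (hh.comp hX))
  have hwX : Measurable (fun ω => w (X ω)) := hwm.comp hX
  have hwbd : ∀ ω, ‖w (X ω)‖ ≤ max Cw 0 := fun ω => by
    rw [Real.norm_eq_abs, abs_of_nonneg (hw0 _)]
    exact le_max_of_le_left (hwb _)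
  -- integrable products
  have hG1int : Integrable (fun ω => w (X ω) * L ω) P :=
    hLint.bdd_mul (c := max Cw 0) hwX.aestronglyMeasurable (ae_of_all _ hwbd)
  have hwint : Integrable (fun ω => w (X ω)) P := by
    have hone : Integrable (fun _ : Ω => (1:ℝ)) P := integrable_const 1
    have := hone.bdd_mul (c := max Cw 0) hwX.aestronglyMeasurable (ae_of_all _ hwbd)
    exact this.congr (ae_of_all _ fun ω => by simp)
  have hebd : ∀ᵐ ω ∂P, ‖e ω‖ ≤ 1 := by
    filter_upwards [he0, he1] with ω h0 h1
    rw [Real.norm_eq_abs, abs_of_nonneg h0]; exact h1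
  have hint1 : Integrable (fun ω => w (X ω) * L ω * A.indicator (fun _ => (1:ℝ)) ω) P := by
    refine (hG1int.indicator hA).congr (ae_of_all _ fun ω => ?_)
    by_cases hω : ω ∈ A <;> simp [hω]
  have hint2 : Integrable (fun ω => w (X ω) * L ω * e ω) P := by
    have := hG1int.bdd_mul (c := 1) heMeas.aestronglyMeasurable hebd
    exact this.congr (ae_of_all _ fun ω => by ring)
  have hint1' : Integrable (fun ω => w (X ω) * A.indicator (fun _ => (1:ℝ)) ω) P := by
    refine (hwint.indicator hA).congr (ae_of_all _ fun ω => ?_)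
    by_cases hω : ω ∈ A <;> simp [hω]
  have hint2' : Integrable (fun ω => w (X ω) * e ω) P := by
    have := hwint.bdd_mul (c := 1) heMeas.aestronglyMeasurable hebd
    exact this.congr (ae_of_all _ fun ω => by ring)
  -- the two key identities
  have KEY1 : ∫ ω, w (X ω) * L ω * A.indicator (fun _ => (1:ℝ)) ω ∂P
      = ∫ ω, w (X ω) * L ω * e ω ∂P := by
    have := key_integral P X U Y hX hU hY A hA e he hind
      (fun z => w z.2.1 * ℓ (z.1, h z.2.1))
      ((hwm.comp (measurable_snd.fst)).mul
        (hℓm.comp (measurable_fst.prodMk (hh.comp measurable_snd.fst))))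
      (fun z => mul_nonneg (hw0 _) (hℓ0 _))
      (by simpa only [hL] using hint1) (by simpa only [hL] using hint2)
    simpa only [hL] using this
  have KEY2 : ∫ ω, w (X ω) * A.indicator (fun _ => (1:ℝ)) ω ∂P = ∫ ω, w (X ω) * e ω ∂P := by
    exact key_integral P X U Y hX hU hY A hA e he hind
      (fun z => w z.2.1) (hwm.comp (measurable_snd.fst)) (fun z => hw0 _) hint1' hint2'
  -- integrability of g and g * L
  have hgint : Integrable (fun ω => w (X ω) * e ω / p) P := hint2'.div_const p
  have hgbd : ∀ᵐ ω ∂P, ‖w (X ω) * e ω / p‖ ≤ max Cw 0 / p := by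
    filter_upwards [he0, he1] with ω h0 h1
    rw [Real.norm_eq_abs, abs_div, abs_of_pos hppos,
      abs_of_nonneg (mul_nonneg (hw0 _) h0)]
    gcongr
    calc w (X ω) * e ω ≤ w (X ω) * 1 := by
          exact mul_le_mul_of_nonneg_left h1 (hw0 _)
      _ ≤ max Cw 0 := by rw [mul_one]; exact le_max_of_le_left (hwb _)
  have hgLint : Integrable (fun ω => (w (X ω) * e ω / p) * L ω) P :=
    hLint.bdd_mul (c := max Cw 0 / p)
      ((hwX.mul heMeas).div_const p).aestronglyMeasurable hgbd
  -- ∫ g = 1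
  have hIg : ∫ ω, w (X ω) * e ω / p ∂P = 1 := by
    rw [integral_div, ← KEY2, hw1]
  -- ∫ g L = (∫ w L 1_A) / p
  have hIgL : ∫ ω, (w (X ω) * e ω / p) * L ω ∂P
      = (∫ ω, w (X ω) * L ω * A.indicator (fun _ => (1:ℝ)) ω ∂P) / p := by
    have hfe : (fun ω => (w (X ω) * e ω / p) * L ω) = fun ω => (w (X ω) * L ω * e ω) / p := by
      funext ω; ring
    rw [hfe, integral_div, KEY1]
  set μ0 : ℝ := ∫ ω, L ω ∂P with hμ0
  -- variance identity
  have hvar : variance L P = ∫ ω, (L ω - μ0) ^ 2 ∂P := by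
    rw [variance_eq_integral hL2.aemeasurable]
  have hsq : Integrable (fun ω => (L ω - μ0) ^ 2) P := (hL2.sub (memLp_const μ0)).integrable_sq
  -- value of ∫ (1 - g)(L - μ0)
  have hq_int : Integrable (fun ω => (1 - w (X ω) * e ω / p) * (L ω - μ0)) P := by
    refine (hLint.sub (integrable_const μ0)).bdd_mul (c := 1 + max Cw 0 / p)
      ((measurable_const.sub ((hwX.mul heMeas).div_const p)).aestronglyMeasurable) ?_
    filter_upwards [hgbd] with ω hg
    calc ‖1 - w (X ω) * e ω / p‖ ≤ ‖(1:ℝ)‖ + ‖w (X ω) * e ω / p‖ := norm_sub_le _ _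
      _ ≤ 1 + max Cw 0 / p := by rw [norm_one]; exact add_le_add le_rfl hg
  have hq_val : ∫ ω, (1 - w (X ω) * e ω / p) * (L ω - μ0) ∂P
      = μ0 - ∫ ω, (w (X ω) * e ω / p) * L ω ∂P := by
    have i1 : Integrable (fun ω => L ω - (w (X ω) * e ω / p) * L ω) P := hLint.sub hgLint
    have i2 : Integrable (fun ω => μ0 - μ0 * (w (X ω) * e ω / p)) P :=
      (integrable_const μ0).sub (hgint.const_mul μ0)
    have hfe : (fun ω => (1 - w (X ω) * e ω / p) * (L ω - μ0))
        = fun ω => (L ω - (w (X ω) * e ω / p) * L ω) - (μ0 - μ0 * (w (X ω) * e ω / p)) := by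
      funext ω; ring
    have e1 : ∫ ω, ((L ω - (w (X ω) * e ω / p) * L ω) - (μ0 - μ0 * (w (X ω) * e ω / p))) ∂P
        = (∫ ω, (L ω - (w (X ω) * e ω / p) * L ω) ∂P)
          - ∫ ω, (μ0 - μ0 * (w (X ω) * e ω / p)) ∂P := integral_sub i1 i2
    have e2 : (∫ ω, (L ω - (w (X ω) * e ω / p) * L ω) ∂P)
        = (∫ ω, L ω ∂P) - ∫ ω, (w (X ω) * e ω / p) * L ω ∂P := integral_sub hLint hgLint
    have e3 : (∫ ω, (μ0 - μ0 * (w (X ω) * e ω / p)) ∂P)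
        = (∫ ω, (μ0:ℝ) ∂P) - ∫ ω, μ0 * (w (X ω) * e ω / p) ∂P :=
      integral_sub (integrable_const μ0) (hgint.const_mul μ0)
    have e4 : (∫ ω, μ0 * (w (X ω) * e ω / p) ∂P) = μ0 * ∫ ω, (w (X ω) * e ω / p) ∂P :=
      integral_const_mul μ0 _
    have e5 : (∫ ω, (μ0:ℝ) ∂P) = μ0 := by simp
    rw [hfe, e1, e2, e3, e4, e5, hIg, ← hμ0]
    ring
  -- pointwise AM–GM bound
  have hptw : ∀ ω, (1 - w (X ω) * e ω / p) * (L ω - μ0)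
      ≤ lam * (w (X ω) * e ω / p - 1) ^ 2 + (L ω - μ0) ^ 2 / (4 * lam) := by
    intro ω
    have h4 : (0:ℝ) < 4 * lam := by linarith
    have key : (1 - w (X ω) * e ω / p) * (L ω - μ0) - lam * (w (X ω) * e ω / p - 1) ^ 2
        ≤ (L ω - μ0) ^ 2 / (4 * lam) := by
      rw [le_div_iff₀ h4]
      nlinarith [sq_nonneg (2 * lam * (1 - w (X ω) * e ω / p) - (L ω - μ0))]
    linarith
  have hbound : ∫ ω, (1 - w (X ω) * e ω / p) * (L ω - μ0) ∂P
      ≤ lam * Δ + variance L P / (4 * lam) := by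
    calc ∫ ω, (1 - w (X ω) * e ω / p) * (L ω - μ0) ∂P
        ≤ ∫ ω, (lam * (w (X ω) * e ω / p - 1) ^ 2 + (L ω - μ0) ^ 2 / (4 * lam)) ∂P :=
          integral_mono hq_int ((hΔfin.const_mul lam).add (hsq.div_const (4 * lam))) hptw
      _ = lam * Δ + variance L P / (4 * lam) := by
          rw [integral_add (hΔfin.const_mul lam) (hsq.div_const (4 * lam)),
            integral_const_mul, integral_div, ← hΔ, hvar]
  have := hq_val ▸ hbound
  linarith [hIgL, this]
end

section
/- On a probability space (Ω, F, P), let X : Ω → 𝒳 and U : Ω → 𝒰 be measurable random variables, let A ∈ F be an event with p := P(A) > 0, and let e := E[1_A | σ(X,U)]. Let w : 𝒳 → [0,∞) be a bounded measurable weight and ν : 𝒳 → ℝ a measurable function such that all expectations below are finite. Then Δ := E[(w(X)·e/p − 1)²] ≤ 2·E[(w(X)/p)²·(ν(X) − 1_A)²] + 2·E[(w(X)·1_A/p − 1)²]. -/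
open MeasureTheory ProbabilityTheory

/-- Auxiliary lemma: the conditional expectation minimizes the weighted Brier score. -/
theorem brier_aux {Ω : Type*} {m : MeasurableSpace Ω} [mΩ : MeasurableSpace Ω]
    (hm : m ≤ mΩ) (P : Measure Ω) [IsProbabilityMeasure P]
    (f : Ω → ℝ) (hfmeas : Measurable f) (hf01 : ∀ ω, 0 ≤ f ω ∧ f ω ≤ 1)
    (Cq : ℝ) (q : Ω → ℝ) (hq0 : ∀ ω, 0 ≤ q ω) (hqb : ∀ ω, q ω ≤ Cq)
    (hqsm : StronglyMeasurable[m] q)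
    (n : Ω → ℝ) (hnsm : StronglyMeasurable[m] n)
    (hqd2int : Integrable (fun ω => q ω * (n ω - f ω) ^ 2) P) :
    ∫ ω, q ω * (f ω - (P[f|m]) ω) ^ 2 ∂P ≤ ∫ ω, q ω * (n ω - f ω) ^ 2 ∂P := by
  haveI : SigmaFinite (P.trim hm) := by infer_instance
  set e : Ω → ℝ := P[f|m] with hedef
  have hfint : Integrable f P := by
    refine Integrable.mono' (integrable_const (1 : ℝ)) hfmeas.aestronglyMeasurable ?_
    refine Filter.Eventually.of_forall fun ω => ?_
    rw [Real.norm_eq_abs, abs_le]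
    exact ⟨by linarith [(hf01 ω).1], (hf01 ω).2⟩
  have hesm : StronglyMeasurable[m] e := stronglyMeasurable_condExp
  have hem : Measurable e := (hesm.mono hm).measurable
  have he0 : 0 ≤ᵐ[P] e :=
    condExp_nonneg (Filter.Eventually.of_forall fun ω => (hf01 ω).1)
  have he1 : e ≤ᵐ[P] fun _ => (1 : ℝ) := by
    have h := condExp_mono (μ := P) (m := m) hfint (integrable_const (1 : ℝ))
      (Filter.Eventually.of_forall fun ω => (hf01 ω).2)
    calc e ≤ᵐ[P] P[fun _ => (1:ℝ)|m] := h
      _ = fun _ => (1:ℝ) := condExp_const hm (1 : ℝ)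
  have hqm : Measurable q := (hqsm.mono hm).measurable
  have hnm : Measurable n := (hnsm.mono hm).measurable
  set d : Ω → ℝ := fun ω => n ω - f ω with hddef
  set r : Ω → ℝ := fun ω => f ω - e ω with hrdef
  set g : Ω → ℝ := fun ω => q ω * (n ω - e ω) with hgdef
  have hdm : Measurable d := hnm.sub hfmeas
  have hrm : Measurable r := hfmeas.sub hem
  have hgm : Measurable g := hqm.mul (hnm.sub hem)
  have hgsm : StronglyMeasurable[m] g := hqsm.mul (hnsm.sub hesm)
  have hr1 : ∀ᵐ ω ∂P, |r ω| ≤ 1 := by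
    filter_upwards [he0, he1] with ω h0 h1
    simp only [Pi.zero_apply] at h0
    have h2 := (hf01 ω).1; have h3 := (hf01 ω).2
    rw [abs_le]
    refine ⟨?_, ?_⟩ <;> simp only [hrdef] <;> [nlinarith; nlinarith]
  have he1' : ∀ᵐ ω ∂P, |e ω| ≤ 1 := by
    filter_upwards [he0, he1] with ω h0 h1
    simp only [Pi.zero_apply] at h0
    rw [abs_le]; exact ⟨by linarith, h1⟩
  -- integrability facts
  have hqint : Integrable q P := by
    refine Integrable.mono' (integrable_const Cq) hqm.aestronglyMeasurable ?_
    exact Filter.Eventually.of_forall fun ω => by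
      rw [Real.norm_eq_abs, abs_of_nonneg (hq0 ω)]; exact hqb ω
  have hqdint : Integrable (fun ω => q ω * d ω) P := by
    refine Integrable.mono' ((hqint.add hqd2int).div_const 2)
      (hqm.mul hdm).aestronglyMeasurable ?_
    refine Filter.Eventually.of_forall fun ω => ?_
    simp only [Real.norm_eq_abs, abs_mul, abs_of_nonneg (hq0 ω), Pi.div_apply, Pi.add_apply]
    have h2 : 2 * |d ω| ≤ 1 + d ω ^ 2 := by
      nlinarith [sq_nonneg (|d ω| - 1), sq_abs (d ω), abs_nonneg (d ω)]
    have h3 := hq0 ω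
    have h4 : (n ω - f ω) ^ 2 = d ω ^ 2 := rfl
    rw [h4]
    nlinarith [mul_le_mul_of_nonneg_left h2 h3]
  have hqrint : Integrable (fun ω => q ω * r ω) P := by
    refine Integrable.mono' (integrable_const Cq) (hqm.mul hrm).aestronglyMeasurable ?_
    filter_upwards [hr1] with ω hω
    rw [Real.norm_eq_abs, abs_mul, abs_of_nonneg (hq0 ω)]
    calc q ω * |r ω| ≤ q ω * 1 := mul_le_mul_of_nonneg_left hω (hq0 ω)
      _ = q ω := mul_one _
      _ ≤ Cq := hqb ω
  have hqr2int : Integrable (fun ω => q ω * r ω ^ 2) P := by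
    refine Integrable.mono' (integrable_const Cq)
      (hqm.mul (hrm.pow_const 2)).aestronglyMeasurable ?_
    filter_upwards [hr1] with ω hω
    rw [Real.norm_eq_abs, abs_mul, abs_of_nonneg (hq0 ω), abs_of_nonneg (sq_nonneg (r ω))]
    have h2 : r ω ^ 2 ≤ 1 := by nlinarith [sq_abs (r ω), abs_nonneg (r ω)]
    calc q ω * r ω ^ 2 ≤ q ω * 1 := mul_le_mul_of_nonneg_left h2 (hq0 ω)
      _ = q ω := mul_one _
      _ ≤ Cq := hqb ω
  have hgeq : g = fun ω => q ω * d ω + q ω * r ω := by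
    funext ω; simp only [hgdef, hddef, hrdef]; ring
  have hgint : Integrable g P := by rw [hgeq]; exact hqdint.add hqrint
  have hgfint : Integrable (fun ω => g ω * f ω) P := by
    refine hgint.mono (hgm.mul hfmeas).aestronglyMeasurable ?_
    refine Filter.Eventually.of_forall fun ω => ?_
    rw [Real.norm_eq_abs, Real.norm_eq_abs, abs_mul]
    have h2 : |f ω| ≤ 1 := by
      rw [abs_le]; exact ⟨by linarith [(hf01 ω).1], (hf01 ω).2⟩
    nlinarith [abs_nonneg (g ω), abs_nonneg (f ω)]
  have hgeint : Integrable (fun ω => g ω * e ω) P := by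
    refine hgint.mono (hgm.mul hem).aestronglyMeasurable ?_
    filter_upwards [he1'] with ω hω
    rw [Real.norm_eq_abs, Real.norm_eq_abs, abs_mul]
    nlinarith [abs_nonneg (g ω), abs_nonneg (e ω)]
  have hqdrint : Integrable (fun ω => q ω * d ω * r ω) P := by
    refine hqdint.mono ((hqm.mul hdm).mul hrm).aestronglyMeasurable ?_
    filter_upwards [hr1] with ω hω
    rw [Real.norm_eq_abs, Real.norm_eq_abs, abs_mul]
    nlinarith [abs_nonneg (q ω * d ω), abs_nonneg (r ω)]
  -- pull-out property: ∫ g f = ∫ g e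
  have hpull : P[g * f|m] =ᵐ[P] g * P[f|m] :=
    condExp_mul_of_stronglyMeasurable_left hgsm (by exact hgfint) hfint
  have hcross : ∫ ω, g ω * f ω ∂P = ∫ ω, g ω * e ω ∂P := by
    have h1 : ∫ ω, (P[g * f|m]) ω ∂P = ∫ ω, (g * f) ω ∂P := integral_condExp hm
    have h2 : ∫ ω, (P[g * f|m]) ω ∂P = ∫ ω, (g * P[f|m]) ω ∂P := integral_congr_ae hpull
    calc ∫ ω, g ω * f ω ∂P = ∫ ω, (g * f) ω ∂P := rfl
      _ = ∫ ω, (g * P[f|m]) ω ∂P := by rw [← h1, h2]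
      _ = ∫ ω, g ω * e ω ∂P := rfl
  have hgrint : Integrable (fun ω => g ω * r ω) P := by
    have hsub : Integrable (fun ω => g ω * f ω - g ω * e ω) P := hgfint.sub hgeint
    refine hsub.congr (Filter.Eventually.of_forall fun ω => ?_)
    simp only [hrdef]; ring
  have hgr0 : ∫ ω, g ω * r ω ∂P = 0 := by
    have h4 : (fun ω => g ω * r ω) = fun ω => g ω * f ω - g ω * e ω := by
      funext ω; simp only [hrdef]; ring
    rw [h4, integral_sub hgfint hgeint, hcross, sub_self]
  -- integrability of q (n - e)^2
  have hSeq : (fun ω => q ω * (n ω - e ω) ^ 2)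
      = fun ω => q ω * d ω ^ 2 + 2 * (q ω * d ω * r ω) + q ω * r ω ^ 2 := by
    funext ω
    have h5 : n ω - e ω = d ω + r ω := by simp only [hddef, hrdef]; ring
    rw [h5]; ring
  have hSint : Integrable (fun ω => q ω * (n ω - e ω) ^ 2) P := by
    rw [hSeq]; exact (hqd2int.add (hqdrint.const_mul 2)).add hqr2int
  -- decomposition: q d² = q(n-e)² - 2 g r + q r²
  have hdecomp : (fun ω => q ω * d ω ^ 2)
      = fun ω => q ω * (n ω - e ω) ^ 2 - 2 * (g ω * r ω) + q ω * r ω ^ 2 := by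
    funext ω
    have hd : d ω = (n ω - e ω) - r ω := by simp only [hddef, hrdef]; ring
    rw [hd]; simp only [hgdef]; ring
  have hval : ∫ ω, q ω * d ω ^ 2 ∂P
      = ∫ ω, q ω * (n ω - e ω) ^ 2 ∂P - 2 * ∫ ω, g ω * r ω ∂P
        + ∫ ω, q ω * r ω ^ 2 ∂P := by
    have hsub : Integrable (fun ω => q ω * (n ω - e ω) ^ 2 - 2 * (g ω * r ω)) P :=
      hSint.sub (hgrint.const_mul 2)
    rw [hdecomp, integral_add hsub hqr2int,
      integral_sub hSint (hgrint.const_mul 2), integral_const_mul _ _]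
  have hnn : 0 ≤ ∫ ω, q ω * (n ω - e ω) ^ 2 ∂P :=
    integral_nonneg fun ω => mul_nonneg (hq0 ω) (sq_nonneg _)
  have : ∫ ω, q ω * r ω ^ 2 ∂P ≤ ∫ ω, q ω * d ω ^ 2 ∂P := by
    rw [hval, hgr0]; linarith
  exact this

/-- empirical upper bound on the divergence term, Theorem 3 of the paper.
With `e = P[A | σ(X,U)]` and `p = P(A) > 0`, for any bounded nonnegative measurable weight
`w` and any measurable `ν` (with all expectations finite),
`Δ = E[(w(X)·e/p − 1)²] ≤ 2·E[(w(X)/p)²·(ν(X) − 1_A)²] + 2·E[(w(X)·1_A/p − 1)²]`. -/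
theorem stmt_6 {Ω 𝓧 𝓤 : Type*} [MeasurableSpace Ω]
    [MeasurableSpace 𝓧] [MeasurableSpace 𝓤]
    (P : Measure Ω) [IsProbabilityMeasure P]
    (X : Ω → 𝓧) (U : Ω → 𝓤)
    (hX : Measurable X) (hU : Measurable U)
    (A : Set Ω) (hA : MeasurableSet A)
    (p : ℝ) (hp : p = (P A).toReal) (hppos : 0 < p)
    (e : Ω → ℝ)
    (he : e = P[A.indicator (fun _ => (1 : ℝ)) |
      MeasurableSpace.comap (fun ω => (X ω, U ω)) inferInstance])
    (w : 𝓧 → ℝ) (hwm : Measurable w) (hw0 : ∀ x, 0 ≤ w x) (Cw : ℝ) (hwb : ∀ x, w x ≤ Cw)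
    (ν : 𝓧 → ℝ) (hνm : Measurable ν)
    (Δ : ℝ) (hΔ : Δ = ∫ ω, (w (X ω) * e ω / p - 1) ^ 2 ∂P)
    (hΔfin : Integrable (fun ω => (w (X ω) * e ω / p - 1) ^ 2) P)
    (hfin1 : Integrable
      (fun ω => (w (X ω) / p) ^ 2 * (ν (X ω) - A.indicator (fun _ => (1 : ℝ)) ω) ^ 2) P)
    (hfin2 : Integrable
      (fun ω => (w (X ω) * A.indicator (fun _ => (1 : ℝ)) ω / p - 1) ^ 2) P) :
    Δ ≤ 2 * ∫ ω, (w (X ω) / p) ^ 2 * (ν (X ω) - A.indicator (fun _ => (1 : ℝ)) ω) ^ 2 ∂P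
        + 2 * ∫ ω, (w (X ω) * A.indicator (fun _ => (1 : ℝ)) ω / p - 1) ^ 2 ∂P := by
  classical
  have hm : MeasurableSpace.comap (fun ω => (X ω, U ω))
      (inferInstance : MeasurableSpace (𝓧 × 𝓤)) ≤ ‹MeasurableSpace Ω› :=
    (hX.prodMk hU).comap_le
  set f : Ω → ℝ := A.indicator (fun _ => (1 : ℝ)) with hfdef
  have hfmeas : Measurable f := measurable_const.indicator hA
  have hf01 : ∀ ω, 0 ≤ f ω ∧ f ω ≤ 1 := by
    intro ω
    by_cases h : ω ∈ A <;>
      simp [hfdef, Set.indicator_of_mem, Set.indicator_of_notMem, h]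
  have hfint : Integrable f P := (integrable_const (1 : ℝ)).indicator hA
  have hem : Measurable e := by
    rw [he]; exact (stronglyMeasurable_condExp.mono hm).measurable
  have he0 : 0 ≤ᵐ[P] e := by
    rw [he]; exact condExp_nonneg (Filter.Eventually.of_forall fun ω => (hf01 ω).1)
  have he1 : e ≤ᵐ[P] fun _ => (1 : ℝ) := by
    rw [he]
    haveI : SigmaFinite (P.trim hm) := by infer_instance
    have h := condExp_mono (μ := P)
      (m := MeasurableSpace.comap (fun ω => (X ω, U ω)) inferInstance)
      hfint (integrable_const (1 : ℝ))
      (Filter.Eventually.of_forall fun ω => (hf01 ω).2)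
    refine h.trans ?_
    rw [condExp_const hm (1 : ℝ)]
  -- m-measurability of compositions through X
  have hφ : Measurable[MeasurableSpace.comap (fun ω => (X ω, U ω)) inferInstance]
      (fun ω => (X ω, U ω)) := Measurable.of_comap_le le_rfl
  set q : Ω → ℝ := fun ω => (w (X ω) / p) ^ 2 with hqdef
  have hq0 : ∀ ω, 0 ≤ q ω := fun ω => sq_nonneg _
  have hqb : ∀ ω, q ω ≤ (Cw / p) ^ 2 := by
    intro ω
    have h1 : 0 ≤ w (X ω) / p := div_nonneg (hw0 _) hppos.le
    have h2 : w (X ω) / p ≤ Cw / p := (div_le_div_iff_of_pos_right hppos).mpr (hwb _)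
    exact pow_le_pow_left₀ h1 h2 2
  have hqm : Measurable q := ((hwm.comp hX).div_const p).pow_const 2
  have hqsm : StronglyMeasurable[MeasurableSpace.comap (fun ω => (X ω, U ω)) inferInstance] q :=
    ((((hwm.comp measurable_fst).comp hφ).div_const p).pow_const 2).stronglyMeasurable
  have hνsm : StronglyMeasurable[MeasurableSpace.comap (fun ω => (X ω, U ω)) inferInstance]
      (fun ω => ν (X ω)) := ((hνm.comp measurable_fst).comp hφ).stronglyMeasurable
  -- key inequality from the auxiliary lemma
  have hkey : ∫ ω, q ω * (f ω - e ω) ^ 2 ∂P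
      ≤ ∫ ω, q ω * (ν (X ω) - f ω) ^ 2 ∂P := by
    have h := brier_aux hm P f hfmeas hf01 ((Cw / p) ^ 2) q hq0 hqb hqsm
      (fun ω => ν (X ω)) hνsm (by exact hfin1)
    rw [← he] at h
    exact h
  -- integrability of q (f - e)²
  have hqr2int : Integrable (fun ω => q ω * (f ω - e ω) ^ 2) P := by
    refine Integrable.mono' (integrable_const ((Cw / p) ^ 2))
      (hqm.mul ((hfmeas.sub hem).pow_const 2)).aestronglyMeasurable ?_
    filter_upwards [he0, he1] with ω h0 h1
    simp only [Pi.zero_apply] at h0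
    rw [Real.norm_eq_abs, abs_mul, abs_of_nonneg (hq0 ω), abs_of_nonneg (sq_nonneg _)]
    have h2 := (hf01 ω).1; have h3 := (hf01 ω).2
    have h4 : (f ω - e ω) ^ 2 ≤ 1 := by nlinarith
    calc q ω * (f ω - e ω) ^ 2 ≤ q ω * 1 := mul_le_mul_of_nonneg_left h4 (hq0 ω)
      _ = q ω := mul_one _
      _ ≤ (Cw / p) ^ 2 := hqb ω
  -- pointwise relaxed triangle inequality
  have hptwise : ∀ ω, (w (X ω) * e ω / p - 1) ^ 2
      ≤ 2 * (q ω * (f ω - e ω) ^ 2) + 2 * (w (X ω) * f ω / p - 1) ^ 2 := by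
    intro ω
    have hab : q ω * (f ω - e ω) ^ 2
        = (w (X ω) * e ω / p - w (X ω) * f ω / p) ^ 2 := by
      simp only [hqdef]; field_simp; ring
    rw [hab]
    nlinarith [sq_nonneg (w (X ω) * e ω / p - 2 * (w (X ω) * f ω / p) + 1)]
  have hmain : Δ ≤ 2 * ∫ ω, q ω * (f ω - e ω) ^ 2 ∂P
      + 2 * ∫ ω, (w (X ω) * f ω / p - 1) ^ 2 ∂P := by
    rw [hΔ]
    have hadd : Integrable (fun ω => 2 * (q ω * (f ω - e ω) ^ 2)
        + 2 * (w (X ω) * f ω / p - 1) ^ 2) P :=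
      (hqr2int.const_mul 2).add (hfin2.const_mul 2)
    have h := integral_mono_ae hΔfin hadd (Filter.Eventually.of_forall hptwise)
    rwa [integral_add (hqr2int.const_mul 2) (hfin2.const_mul 2),
      integral_const_mul _ _, integral_const_mul _ _] at h
  calc Δ ≤ 2 * ∫ ω, q ω * (f ω - e ω) ^ 2 ∂P
        + 2 * ∫ ω, (w (X ω) * f ω / p - 1) ^ 2 ∂P := hmain
    _ ≤ 2 * ∫ ω, q ω * (ν (X ω) - f ω) ^ 2 ∂P
        + 2 * ∫ ω, (w (X ω) * f ω / p - 1) ^ 2 ∂P := by linarith [hkey]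
    _ = _ := rfl
end

section
/- For α ∈ (0,1), define pinball_α : ℝ → ℝ by pinball_α(x) := x·α if x ≥ 0 and pinball_α(x) := −x·(1−α) if x < 0, and let C := max{α, 1−α} / min{α, 1−α}. Then for all x, y ∈ ℝ, pinball_α(x + y) ≤ C·(pinball_α(x) + pinball_α(y)) and pinball_α(x − y) ≤ C·(pinball_α(x) + pinball_α(y)). -/
/-- The pinball (quantile-loss) function: `pinball α x = x·α` if `x ≥ 0`
and `−x·(1−α)` if `x < 0`. -/
noncomputable def pinball (α x : ℝ) : ℝ := if 0 ≤ x then x * α else -x * (1 - α)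

lemma pinball_le_max (α : ℝ) (hα : α ∈ Set.Ioo (0 : ℝ) 1) (z : ℝ) :
    pinball α z ≤ max α (1 - α) * |z| := by
  obtain ⟨h0, h1⟩ := hα
  unfold pinball
  split_ifs with h
  · have := le_max_left α (1 - α); nlinarith [abs_of_nonneg h]
  · have hz := lt_of_not_ge h
    have := le_max_right α (1 - α); nlinarith [abs_of_neg hz]

lemma min_abs_le_pinball (α : ℝ) (hα : α ∈ Set.Ioo (0 : ℝ) 1) (z : ℝ) :
    min α (1 - α) * |z| ≤ pinball α z := by
  obtain ⟨h0, h1⟩ := hα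
  unfold pinball
  split_ifs with h
  · have := min_le_left α (1 - α); nlinarith [abs_of_nonneg h]
  · have hz := lt_of_not_ge h
    have := min_le_right α (1 - α); nlinarith [abs_of_neg hz]

lemma pinball_key (α : ℝ) (hα : α ∈ Set.Ioo (0 : ℝ) 1) (x y z : ℝ)
    (hz : |z| ≤ |x| + |y|) :
    pinball α z ≤ max α (1 - α) / min α (1 - α) * (pinball α x + pinball α y) := by
  obtain ⟨h0, h1⟩ := hα
  have hmin : 0 < min α (1 - α) := lt_min h0 (by linarith)
  have hmax : 0 ≤ max α (1 - α) := le_trans h0.le (le_max_left _ _)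
  have hC : max α (1 - α) / min α (1 - α) * min α (1 - α) = max α (1 - α) :=
    div_mul_cancel₀ _ hmin.ne'
  calc pinball α z ≤ max α (1 - α) * |z| := pinball_le_max α ⟨h0, h1⟩ z
    _ ≤ max α (1 - α) * (|x| + |y|) := mul_le_mul_of_nonneg_left hz hmax
    _ = max α (1 - α) / min α (1 - α) * (min α (1 - α) * |x| + min α (1 - α) * |y|) := by
        rw [mul_add, mul_add, ← mul_assoc, ← mul_assoc, hC]
    _ ≤ max α (1 - α) / min α (1 - α) * (pinball α x + pinball α y) := by
        apply mul_le_mul_of_nonneg_left _ (div_nonneg hmax hmin.le)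
        exact add_le_add (min_abs_le_pinball α ⟨h0, h1⟩ x) (min_abs_le_pinball α ⟨h0, h1⟩ y)

/-- relaxed subadditivity of the pinball function, i.e. the
α-quantile loss satisfies Assumption 1 with `C = max{α,1−α}/min{α,1−α}`. -/
theorem stmt_8 (α : ℝ) (hα : α ∈ Set.Ioo (0 : ℝ) 1) (x y : ℝ) :
    pinball α (x + y) ≤ max α (1 - α) / min α (1 - α) * (pinball α x + pinball α y) ∧
    pinball α (x - y) ≤ max α (1 - α) / min α (1 - α) * (pinball α x + pinball α y) := by
  exact ⟨pinball_key α hα x y _ (abs_add_le x y),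
    pinball_key α hα x y _ (abs_sub x y)⟩
end

section
/- Let ψ : ℝ → [0,∞) satisfy ψ(x + y) ≤ C·(ψ(x) + ψ(y)) and ψ(x − y) ≤ C·(ψ(x) + ψ(y)) for all x, y ∈ ℝ, for some constant C ≥ 1. Let Y¹, Y⁰ be real random variables, X a random variable, and h¹, h⁰, τ¹, τ⁰, e : 𝒳 → ℝ measurable functions, with all quantities below integrable. Then E[ψ(Y¹ − Y⁰ − (e(X)·τ¹(X) + (1−e(X))·τ⁰(X)))] ≤ C²·( E[ψ((1−e(X))·(Y¹ − h¹(X)))] + E[ψ(e(X)·(Y⁰ − h⁰(X)))] + E[ψ(e(X)·(τ¹(X) − (Y¹ − h⁰(X))))] + E[ψ((1−e(X))·(τ⁰(X) − (h¹(X) − Y⁰)))] ). -/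
open MeasureTheory

/-- X-learner loss decomposition via relaxed subadditivity.
If `ψ ≥ 0` satisfies `ψ(x ± y) ≤ C·(ψ(x) + ψ(y))` with `C ≥ 1`, then the complete
X-learner loss is bounded by `C²` times the sum of the four component losses. -/
theorem stmt_12 {Ω 𝓧 : Type*} [MeasurableSpace Ω] [MeasurableSpace 𝓧]
    (P : Measure Ω) [IsProbabilityMeasure P]
    (ψ : ℝ → ℝ) (hψ0 : ∀ x, 0 ≤ ψ x)
    (C : ℝ) (hC : 1 ≤ C)
    (hadd : ∀ x y : ℝ, ψ (x + y) ≤ C * (ψ x + ψ y))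
    (hsub : ∀ x y : ℝ, ψ (x - y) ≤ C * (ψ x + ψ y))
    (Y1 Y0 : Ω → ℝ) (X : Ω → 𝓧)
    (h1 h0 τ1 τ0 e : 𝓧 → ℝ)
    (hh1 : Measurable h1) (hh0 : Measurable h0) (hτ1 : Measurable τ1)
    (hτ0 : Measurable τ0) (he : Measurable e)
    (hintT : Integrable
      (fun ω => ψ (Y1 ω - Y0 ω - (e (X ω) * τ1 (X ω) + (1 - e (X ω)) * τ0 (X ω)))) P)
    (hint1 : Integrable (fun ω => ψ ((1 - e (X ω)) * (Y1 ω - h1 (X ω)))) P)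
    (hint0 : Integrable (fun ω => ψ (e (X ω) * (Y0 ω - h0 (X ω)))) P)
    (hint10 : Integrable (fun ω => ψ (e (X ω) * (τ1 (X ω) - (Y1 ω - h0 (X ω))))) P)
    (hint01 : Integrable (fun ω => ψ ((1 - e (X ω)) * (τ0 (X ω) - (h1 (X ω) - Y0 ω)))) P) :
    ∫ ω, ψ (Y1 ω - Y0 ω - (e (X ω) * τ1 (X ω) + (1 - e (X ω)) * τ0 (X ω))) ∂P
      ≤ C ^ 2 * ((∫ ω, ψ ((1 - e (X ω)) * (Y1 ω - h1 (X ω))) ∂P)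
          + (∫ ω, ψ (e (X ω) * (Y0 ω - h0 (X ω))) ∂P)
          + (∫ ω, ψ (e (X ω) * (τ1 (X ω) - (Y1 ω - h0 (X ω)))) ∂P)
          + ∫ ω, ψ ((1 - e (X ω)) * (τ0 (X ω) - (h1 (X ω) - Y0 ω))) ∂P) := by
  have key : ∀ ω, ψ (Y1 ω - Y0 ω - (e (X ω) * τ1 (X ω) + (1 - e (X ω)) * τ0 (X ω)))
      ≤ C ^ 2 * (ψ ((1 - e (X ω)) * (Y1 ω - h1 (X ω)))
          + ψ (e (X ω) * (Y0 ω - h0 (X ω)))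
          + ψ (e (X ω) * (τ1 (X ω) - (Y1 ω - h0 (X ω))))
          + ψ ((1 - e (X ω)) * (τ0 (X ω) - (h1 (X ω) - Y0 ω)))) := by
    intro ω
    set a := (1 - e (X ω)) * (Y1 ω - h1 (X ω))
    set b := e (X ω) * (Y0 ω - h0 (X ω))
    set c := e (X ω) * (τ1 (X ω) - (Y1 ω - h0 (X ω)))
    set d := (1 - e (X ω)) * (τ0 (X ω) - (h1 (X ω) - Y0 ω))
    have hid : Y1 ω - Y0 ω - (e (X ω) * τ1 (X ω) + (1 - e (X ω)) * τ0 (X ω))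
        = (a - b) - (c + d) := by simp only [a, b, c, d]; ring
    rw [hid]
    calc ψ ((a - b) - (c + d)) ≤ C * (ψ (a - b) + ψ (c + d)) := hsub _ _
      _ ≤ C * (C * (ψ a + ψ b) + C * (ψ c + ψ d)) := by
          have h1' := hsub a b
          have h2' := hadd c d
          nlinarith [hψ0 (a-b), hψ0 (c+d)]
      _ = C ^ 2 * (ψ a + ψ b + ψ c + ψ d) := by ring
  calc ∫ ω, ψ (Y1 ω - Y0 ω - (e (X ω) * τ1 (X ω) + (1 - e (X ω)) * τ0 (X ω))) ∂P
      ≤ ∫ ω, C ^ 2 * (ψ ((1 - e (X ω)) * (Y1 ω - h1 (X ω)))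
          + ψ (e (X ω) * (Y0 ω - h0 (X ω)))
          + ψ (e (X ω) * (τ1 (X ω) - (Y1 ω - h0 (X ω))))
          + ψ ((1 - e (X ω)) * (τ0 (X ω) - (h1 (X ω) - Y0 ω)))) ∂P := by
        refine integral_mono hintT ?_ key
        exact (((hint1.add hint0).add hint10).add hint01).const_mul _
    _ = C ^ 2 * ((∫ ω, ψ ((1 - e (X ω)) * (Y1 ω - h1 (X ω))) ∂P)
          + (∫ ω, ψ (e (X ω) * (Y0 ω - h0 (X ω))) ∂P)
          + (∫ ω, ψ (e (X ω) * (τ1 (X ω) - (Y1 ω - h0 (X ω)))) ∂P)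
          + ∫ ω, ψ ((1 - e (X ω)) * (τ0 (X ω) - (h1 (X ω) - Y0 ω))) ∂P) := by
        have I2 : Integrable (fun ω => ψ ((1 - e (X ω)) * (Y1 ω - h1 (X ω)))
            + ψ (e (X ω) * (Y0 ω - h0 (X ω)))) P := hint1.add hint0
        have I3 : Integrable (fun ω => ψ ((1 - e (X ω)) * (Y1 ω - h1 (X ω)))
            + ψ (e (X ω) * (Y0 ω - h0 (X ω)))
            + ψ (e (X ω) * (τ1 (X ω) - (Y1 ω - h0 (X ω))))) P := I2.add hint10
        rw [MeasureTheory.integral_const_mul]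
        congr 1
        rw [integral_add I3 hint01, integral_add I2 hint10, integral_add hint1 hint0]
end

section
/- On a probability space (Ω, F, P), let X : Ω → 𝒳, U : Ω → 𝒰, Y¹, Y⁰ : Ω → ℝ be measurable, T : Ω → {0,1} measurable with p_a := P(T=a) > 0 and e_a := E[1_{T=a} | σ(X,U)] for a ∈ {0,1}, and assume for each a that Y^a and 1_{T=a} are conditionally independent given σ(X,U). Let ψ : ℝ → [0,∞) satisfy ψ(x ± y) ≤ C·(ψ(x) + ψ(y)) for all x, y, with ℓ(y,ŷ) := ψ(y − ŷ). Let h¹, h⁰, τ¹, τ⁰ : 𝒳 → ℝ and e : 𝒳 → ℝ be measurable, and w¹, w⁰ : 𝒳 → [0,∞) bounded measurable weights with E[w^a(X) | T=a] = 1. Define L₁ := ψ((1−e(X))(Y¹ − h¹(X))), L₀ := ψ(e(X)(Y⁰ − h⁰(X))), L_{1,0} := ψ(e(X)(τ¹(X) − (Y¹ − h⁰(X)))), L_{0,1} := ψ((1−e(X))(τ⁰(X) − (h¹(X) − Y⁰))), all assumed square-integrable, and assume Δ_{T=a} := E[(w^a(X)·e_a/p_a − 1)²] < ∞. Then for all λ₁,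 λ₀, λ_{1,0}, λ_{0,1} > 0: E[ℓ(Y¹ − Y⁰, e(X)τ¹(X) + (1−e(X))τ⁰(X))] ≤ C²·( E[w¹(X)·L₁ | T=1] + E[w⁰(X)·L₀ | T=0] + E[w¹(X)·L_{1,0} | T=1] + E[w⁰(X)·L_{0,1} | T=0] + (λ₁ + λ_{1,0})·Δ_{T=1} + (λ₀ + λ_{0,1})·Δ_{T=0} + Var(L₁)/(4λ₁) + Var(L₀)/(4λ₀) + Var(L_{1,0})/(4λ_{1,0}) + Var(L_{0,1})/(4λ_{0,1}) ). -/
open MeasureTheory ProbabilityTheory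


lemma aux_set_eq {Ω : Type*} {m' : MeasurableSpace Ω} [mΩ : MeasurableSpace Ω]
    [StandardBorelSpace Ω]
    (P : Measure Ω) [IsProbabilityMeasure P] (hm' : m' ≤ mΩ)
    {S : Set Ω} (hS : MeasurableSet S)
    {Z : Ω → ℝ} (hZ : Measurable Z)
    (hind : CondIndepFun m' hm' Z (S.indicator fun _ => (1 : ℝ)) P)
    {s : Set Ω} (hs : MeasurableSet[m' ⊔ MeasurableSpace.comap Z inferInstance] s) :
    ∫ ω in s, S.indicator (fun _ => (1 : ℝ)) ω ∂P
      = ∫ ω in s, (P[S.indicator (fun _ => (1 : ℝ)) | m']) ω ∂P := by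
  have hm'' : m' ⊔ MeasurableSpace.comap Z inferInstance ≤ mΩ := sup_le hm' hZ.comap_le
  set E : Ω → ℝ := P[S.indicator (fun _ => (1 : ℝ)) | m'] with hE
  have hEsm : StronglyMeasurable[m'] E := stronglyMeasurable_condExp
  have hEint : Integrable E P := integrable_condExp
  have h1S_int : Integrable (S.indicator (fun _ => (1 : ℝ))) P :=
    (integrable_const (1 : ℝ)).indicator hS
  have hE0 : 0 ≤ᵐ[P] E := condExp_nonneg (Filter.Eventually.of_forall fun ω =>
    Set.indicator_nonneg (fun _ _ => zero_le_one) ω)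
  have hE1 : E ≤ᵐ[P] fun _ => (1 : ℝ) := by
    have := condExp_mono (m := m') (μ := P) h1S_int (integrable_const (1 : ℝ))
      (Filter.Eventually.of_forall fun ω => Set.indicator_le_self' (fun _ _ => zero_le_one) ω)
    rwa [condExp_const hm'] at this
  have hEbdd : ∀ᵐ ω ∂P, ‖E ω‖ ≤ 1 := by
    filter_upwards [hE0, hE1] with ω h0 h1
    rw [Real.norm_eq_abs, abs_of_nonneg h0]; exact h1
  have h_eq : (m' ⊔ MeasurableSpace.comap Z inferInstance : MeasurableSpace Ω)
      = MeasurableSpace.generateFrom {s | ∃ s₁ s₂, MeasurableSet[m'] s₁ ∧ MeasurableSet s₂ ∧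
        s = s₁ ∩ Z ⁻¹' s₂} := by
    refine le_antisymm (sup_le ?_ ?_) (MeasurableSpace.generateFrom_le ?_)
    · exact fun t ht => MeasurableSpace.measurableSet_generateFrom
        ⟨t, Set.univ, ht, MeasurableSet.univ, by simp⟩
    · rintro t ⟨t₂, ht₂, rfl⟩
      exact MeasurableSpace.measurableSet_generateFrom
        ⟨Set.univ, t₂, MeasurableSet.univ, ht₂, by simp⟩
    · rintro t ⟨t₁, t₂, ht₁, ht₂, rfl⟩
      have hl : m' ≤ m' ⊔ MeasurableSpace.comap Z inferInstance := le_sup_left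
      have hr : MeasurableSpace.comap Z inferInstance
          ≤ m' ⊔ MeasurableSpace.comap Z inferInstance := le_sup_right
      exact MeasurableSet.inter (hl t₁ ht₁) (hr _ ⟨t₂, ht₂, rfl⟩)
  have h_pi : IsPiSystem {s : Set Ω | ∃ s₁ s₂, MeasurableSet[m'] s₁ ∧ MeasurableSet s₂ ∧
      s = s₁ ∩ Z ⁻¹' s₂} := by
    rintro u ⟨u₁, u₂, hu₁, hu₂, rfl⟩ v ⟨v₁, v₂, hv₁, hv₂, rfl⟩ -
    refine ⟨u₁ ∩ v₁, u₂ ∩ v₂, hu₁.inter hv₁, hu₂.inter hv₂, ?_⟩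
    rw [Set.preimage_inter]
    ext ω; simp only [Set.mem_inter_iff]; tauto
  refine MeasurableSpace.induction_on_inter
    (C := fun t _ => ∫ ω in t, S.indicator (fun _ => (1 : ℝ)) ω ∂P = ∫ ω in t, E ω ∂P)
    (m := m' ⊔ MeasurableSpace.comap Z inferInstance) h_eq h_pi ?_ ?_ ?_ ?_ _ hs
  · simp
  · -- base case
    rintro t ⟨t₁, t₂, ht₁, ht₂, rfl⟩
    have ht₁' : MeasurableSet t₁ := hm' t₁ ht₁
    have hZt₂ : MeasurableSet (Z ⁻¹' t₂) := hZ ht₂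
    have hpre : (S.indicator (fun _ => (1 : ℝ))) ⁻¹' {1} = S := by
      ext ω; by_cases h : ω ∈ S <;>
        simp [Set.indicator_of_mem, Set.indicator_of_notMem, h]
    have hprod := (condIndepFun_iff_condExp_inter_preimage_eq_mul (μ := P)
      (m' := m') (hm' := hm') hZ
      ((measurable_const (a := (1:ℝ))).indicator hS)).mp hind t₂ {1} ht₂
      (measurableSet_singleton 1)
    rw [hpre] at hprod
    have h1t_int : Integrable ((Z ⁻¹' t₂).indicator (fun _ => (1 : ℝ))) P :=
      (integrable_const (1 : ℝ)).indicator hZt₂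
    have hE1t_int : Integrable (fun ω => E ω * (Z ⁻¹' t₂).indicator (fun _ => (1 : ℝ)) ω) P :=
      h1t_int.bdd_mul (hEsm.mono hm').aestronglyMeasurable hEbdd
    have hpull := condExp_mul_of_stronglyMeasurable_left (m := m') (μ := P) hEsm
      hE1t_int h1t_int
    calc ∫ ω in t₁ ∩ Z ⁻¹' t₂, S.indicator (fun _ => (1 : ℝ)) ω ∂P
        = ∫ ω in t₁, (Z ⁻¹' t₂).indicator (S.indicator (fun _ => (1 : ℝ))) ω ∂P := by
          rw [setIntegral_indicator hZt₂]
      _ = ∫ ω in t₁, ((Z ⁻¹' t₂) ∩ S).indicator (fun _ => (1 : ℝ)) ω ∂P := by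
          rw [Set.indicator_indicator]
      _ = ∫ ω in t₁, (P[((Z ⁻¹' t₂) ∩ S).indicator (fun _ => (1 : ℝ)) | m']) ω ∂P := by
          rw [setIntegral_condExp hm' ((integrable_const (1:ℝ)).indicator (hZt₂.inter hS)) ht₁]
      _ = ∫ ω in t₁, (P[(Z ⁻¹' t₂).indicator (fun _ => (1 : ℝ)) | m']) ω * E ω ∂P :=
          setIntegral_congr_ae ht₁' (hprod.mono fun ω h _ => h)
      _ = ∫ ω in t₁, (P[(fun ω => E ω * (Z ⁻¹' t₂).indicator (fun _ => (1 : ℝ)) ω) | m']) ω ∂P := by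
          refine setIntegral_congr_ae ht₁' ?_
          filter_upwards [hpull] with ω h _
          rw [show (fun ω => E ω * (Z ⁻¹' t₂).indicator (fun _ => (1:ℝ)) ω)
            = E * (Z ⁻¹' t₂).indicator (fun _ => (1:ℝ)) from rfl, h]
          simp [mul_comm]
      _ = ∫ ω in t₁, E ω * (Z ⁻¹' t₂).indicator (fun _ => (1 : ℝ)) ω ∂P := by
          rw [setIntegral_condExp hm' hE1t_int ht₁]
      _ = ∫ ω in t₁, (Z ⁻¹' t₂).indicator E ω ∂P := by
          refine setIntegral_congr_ae ht₁' (Filter.Eventually.of_forall fun ω _ => ?_)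
          by_cases h : ω ∈ Z ⁻¹' t₂ <;>
            simp [Set.indicator_of_mem, Set.indicator_of_notMem, h]
      _ = ∫ ω in t₁ ∩ Z ⁻¹' t₂, E ω ∂P := setIntegral_indicator hZt₂
  · -- compl
    intro t ht hC
    have ht' : MeasurableSet t := hm'' t ht
    have htot : ∫ ω, S.indicator (fun _ => (1 : ℝ)) ω ∂P = ∫ ω, E ω ∂P :=
      (integral_condExp hm').symm
    have h1 := integral_add_compl ht' h1S_int
    have h2 := integral_add_compl ht' hEint
    linarith
  · -- disjoint union
    intro f hdisj hmeas hC
    have hmeas' : ∀ i, MeasurableSet (f i) := fun i => hm'' _ (hmeas i)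
    rw [integral_iUnion hmeas' hdisj h1S_int.integrableOn,
      integral_iUnion hmeas' hdisj hEint.integrableOn]
    exact tsum_congr hC

lemma aux_change {Ω : Type*} {m' : MeasurableSpace Ω} [mΩ : MeasurableSpace Ω]
    [StandardBorelSpace Ω]
    (P : Measure Ω) [IsProbabilityMeasure P] (hm' : m' ≤ mΩ)
    {S : Set Ω} (hS : MeasurableSet S)
    {Z : Ω → ℝ} (hZ : Measurable Z)
    (hind : CondIndepFun m' hm' Z (S.indicator fun _ => (1 : ℝ)) P)
    {G : Ω → ℝ} (hGm : Measurable[m' ⊔ MeasurableSpace.comap Z inferInstance] G)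
    (hG0 : ∀ ω, 0 ≤ G ω) (hGint : Integrable G P) :
    ∫ ω, G ω * S.indicator (fun _ => (1 : ℝ)) ω ∂P
      = ∫ ω, G ω * (P[S.indicator (fun _ => (1 : ℝ)) | m']) ω ∂P := by
  have hm'' : m' ⊔ MeasurableSpace.comap Z inferInstance ≤ mΩ := sup_le hm' hZ.comap_le
  set E : Ω → ℝ := P[S.indicator (fun _ => (1 : ℝ)) | m'] with hE
  have hEsm : StronglyMeasurable[m'] E := stronglyMeasurable_condExp
  have hEm : Measurable E := (hEsm.mono hm').measurable
  have hE0 : 0 ≤ᵐ[P] E := condExp_nonneg (Filter.Eventually.of_forall fun ω =>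
    Set.indicator_nonneg (fun _ _ => zero_le_one) ω)
  have hE1 : E ≤ᵐ[P] fun _ => (1 : ℝ) := by
    have := condExp_mono (m := m') (μ := P) ((integrable_const (1 : ℝ)).indicator hS)
      (integrable_const (1 : ℝ))
      (Filter.Eventually.of_forall fun ω => Set.indicator_le_self' (fun _ _ => zero_le_one) ω)
    rwa [condExp_const hm'] at this
  have hEbdd : ∀ᵐ ω ∂P, ‖E ω‖ ≤ 1 := by
    filter_upwards [hE0, hE1] with ω h0 h1
    rw [Real.norm_eq_abs, abs_of_nonneg h0]; exact h1
  have hGm0 : Measurable G := hGm.mono hm'' le_rfl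
  -- measure equality on the sub-σ-algebra
  have hQ : ∀ s : Set Ω, MeasurableSet[m' ⊔ MeasurableSpace.comap Z inferInstance] s →
      P.restrict S s = (P.withDensity (fun ω => ENNReal.ofReal (E ω))) s := by
    intro s hs
    have hs' : MeasurableSet s := hm'' s hs
    have h1 : P.restrict S s = ENNReal.ofReal (∫ ω in s, S.indicator (fun _ => (1:ℝ)) ω ∂P) := by
      rw [Measure.restrict_apply hs', setIntegral_indicator hS]
      simp only [integral_const, MeasurableSet.univ, Measure.restrict_apply, Set.univ_inter,
        smul_eq_mul, mul_one]
      rw [measureReal_restrict_apply_univ, measureReal_def, ENNReal.ofReal_toReal (measure_ne_top _ _)]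
    have h2 : (P.withDensity (fun ω => ENNReal.ofReal (E ω))) s
        = ENNReal.ofReal (∫ ω in s, E ω ∂P) := by
      rw [withDensity_apply _ hs',
        ← ofReal_integral_eq_lintegral_ofReal (integrable_condExp.restrict)
          (ae_restrict_of_ae hE0)]
    rw [h1, h2, aux_set_eq P hm' hS hZ hind hs]
  have htrim : (P.restrict S).trim hm'' = (P.withDensity (fun ω => ENNReal.ofReal (E ω))).trim hm'' := by
    refine @Measure.ext Ω (m' ⊔ MeasurableSpace.comap Z inferInstance) _ _ fun s hs => ?_
    rw [trim_measurableSet_eq hm'' hs, trim_measurableSet_eq hm'' hs]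
    exact hQ s hs
  have hFm : Measurable[m' ⊔ MeasurableSpace.comap Z inferInstance]
      (fun ω => ENNReal.ofReal (G ω)) := hGm.ennreal_ofReal
  have hlin : ∫⁻ ω, ENNReal.ofReal (G ω) ∂(P.restrict S)
      = ∫⁻ ω, ENNReal.ofReal (G ω) ∂(P.withDensity (fun ω => ENNReal.ofReal (E ω))) := by
    rw [← lintegral_trim hm'' hFm, ← lintegral_trim hm'' hFm, htrim]
  -- convert both sides
  have hGS_int : Integrable (fun ω => G ω * S.indicator (fun _ => (1:ℝ)) ω) P := by
    refine Integrable.mono' hGint ?_ (Filter.Eventually.of_forall fun ω => ?_)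
    · exact (hGm0.mul (measurable_const.indicator hS)).aestronglyMeasurable
    · rw [Real.norm_eq_abs, abs_mul]
      by_cases h : ω ∈ S <;>
        simp [Set.indicator_of_mem, Set.indicator_of_notMem, h, abs_of_nonneg (hG0 ω),
          le_abs_self, abs_nonneg, hG0 ω]
  have hEG_int : Integrable (fun ω => E ω * G ω) P :=
    hGint.bdd_mul (hEsm.mono hm').aestronglyMeasurable hEbdd
  have hL : ENNReal.ofReal (∫ ω, G ω * S.indicator (fun _ => (1:ℝ)) ω ∂P)
      = ∫⁻ ω, ENNReal.ofReal (G ω) ∂(P.restrict S) := by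
    rw [ofReal_integral_eq_lintegral_ofReal hGS_int (Filter.Eventually.of_forall fun ω =>
      mul_nonneg (hG0 ω) (Set.indicator_nonneg (fun _ _ => zero_le_one) ω))]
    rw [← lintegral_indicator hS]
    refine lintegral_congr fun ω => ?_
    by_cases h : ω ∈ S <;>
      simp [Set.indicator_of_mem, Set.indicator_of_notMem, h]
  have hR : ENNReal.ofReal (∫ ω, E ω * G ω ∂P)
      = ∫⁻ ω, ENNReal.ofReal (G ω) ∂(P.withDensity (fun ω => ENNReal.ofReal (E ω))) := by
    rw [ofReal_integral_eq_lintegral_ofReal hEG_int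
        (by filter_upwards [hE0] with ω h0; exact mul_nonneg h0 (hG0 ω)),
      lintegral_withDensity_eq_lintegral_mul _ hEm.ennreal_ofReal hGm0.ennreal_ofReal]
    refine lintegral_congr_ae ?_
    filter_upwards [hE0] with ω h0
    simp [ENNReal.ofReal_mul h0]
  have hfin : ∫ ω, G ω * S.indicator (fun _ => (1:ℝ)) ω ∂P = ∫ ω, E ω * G ω ∂P := by
    have := hL.trans (hlin.trans hR.symm)
    have hn1 : 0 ≤ ∫ ω, G ω * S.indicator (fun _ => (1:ℝ)) ω ∂P :=
      integral_nonneg fun ω => mul_nonneg (hG0 ω) (Set.indicator_nonneg (fun _ _ => zero_le_one) ω)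
    have hn2 : 0 ≤ ∫ ω, E ω * G ω ∂P := by
      refine integral_nonneg_of_ae ?_
      filter_upwards [hE0] with ω h0
      exact mul_nonneg h0 (hG0 ω)
    exact (ENNReal.ofReal_eq_ofReal_iff hn1 hn2).mp this
  rw [hfin]
  exact integral_congr_ae (Filter.Eventually.of_forall fun ω => mul_comm _ _)

lemma aux_l2_mul {Ω : Type*} [MeasurableSpace Ω] {P : Measure Ω} {f g : Ω → ℝ}
    (hf : MemLp f 2 P) (hg : MemLp g 2 P) : Integrable (fun ω => f ω * g ω) P := by
  refine Integrable.mono' ((hf.integrable_sq.add hg.integrable_sq).div_const 2)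
    (hf.1.mul hg.1) (Filter.Eventually.of_forall fun ω => ?_)
  rw [Real.norm_eq_abs, abs_mul]
  simp only [Pi.add_apply]
  nlinarith [sq_nonneg (|f ω| - |g ω|), sq_abs (f ω), sq_abs (g ω), abs_nonneg (f ω),
    abs_nonneg (g ω)]

lemma aux_term {Ω : Type*} {m' : MeasurableSpace Ω} [mΩ : MeasurableSpace Ω]
    [StandardBorelSpace Ω]
    (P : Measure Ω) [IsProbabilityMeasure P] (hm' : m' ≤ mΩ)
    {S : Set Ω} (hS : MeasurableSet S)
    {Z : Ω → ℝ} (hZ : Measurable Z)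
    (hind : CondIndepFun m' hm' Z (S.indicator fun _ => (1 : ℝ)) P)
    {W : Ω → ℝ} (hWm : Measurable[m'] W) (hW0 : ∀ ω, 0 ≤ W ω) {Cw : ℝ} (hWb : ∀ ω, W ω ≤ Cw)
    {L : Ω → ℝ} (hLm : Measurable[m' ⊔ MeasurableSpace.comap Z inferInstance] L)
    (hL0 : ∀ ω, 0 ≤ L ω) (hLsq : MemLp L 2 P)
    {pb : ℝ} (hpb : 0 < pb)
    (hw1 : (∫ ω, W ω * S.indicator (fun _ => (1 : ℝ)) ω ∂P) / pb = 1)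
    (hΔfin : Integrable (fun ω =>
      (W ω * (P[S.indicator (fun _ => (1:ℝ))|m']) ω / pb - 1) ^ 2) P)
    {lam : ℝ} (hlam : 0 < lam) :
    ∫ ω, L ω ∂P ≤ (∫ ω, W ω * L ω * S.indicator (fun _ => (1 : ℝ)) ω ∂P) / pb
      + lam * (∫ ω, (W ω * (P[S.indicator (fun _ => (1:ℝ))|m']) ω / pb - 1) ^ 2 ∂P)
      + variance L P / (4 * lam) := by
  have hm'' : m' ⊔ MeasurableSpace.comap Z inferInstance ≤ mΩ := sup_le hm' hZ.comap_le
  set E : Ω → ℝ := P[S.indicator (fun _ => (1 : ℝ)) | m'] with hE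
  have hEsm : StronglyMeasurable[m'] E := stronglyMeasurable_condExp
  have hEm : Measurable E := (hEsm.mono hm').measurable
  have hWmb : Measurable W := hWm.mono hm' le_rfl
  have hWaes : AEStronglyMeasurable W P := hWmb.aestronglyMeasurable
  have hWnorm : ∀ᵐ ω ∂P, ‖W ω‖ ≤ Cw := Filter.Eventually.of_forall fun ω => by
    rw [Real.norm_eq_abs, abs_of_nonneg (hW0 ω)]; exact hWb ω
  have hLint : Integrable L P := hLsq.integrable one_le_two
  have hWL_int : Integrable (fun ω => W ω * L ω) P := hLint.bdd_mul hWaes hWnorm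
  have hW_int : Integrable W P :=
    Integrable.mono' (integrable_const Cw) hWaes hWnorm
  have key1 : ∫ ω, W ω * L ω * S.indicator (fun _ => (1 : ℝ)) ω ∂P
      = ∫ ω, W ω * L ω * E ω ∂P := by
    refine aux_change P hm' hS hZ hind ?_ (fun ω => mul_nonneg (hW0 ω) (hL0 ω)) hWL_int
    exact (hWm.mono le_sup_left le_rfl).mul hLm
  have key2 : ∫ ω, W ω * S.indicator (fun _ => (1 : ℝ)) ω ∂P = ∫ ω, W ω * E ω ∂P :=
    aux_change P hm' hS hZ hind (hWm.mono le_sup_left le_rfl) hW0 hW_int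
  have hEbdd : ∀ᵐ ω ∂P, ‖E ω‖ ≤ 1 := by
    have hE0 : 0 ≤ᵐ[P] E := condExp_nonneg (Filter.Eventually.of_forall fun ω =>
      Set.indicator_nonneg (fun _ _ => zero_le_one) ω)
    have hE1 : E ≤ᵐ[P] fun _ => (1 : ℝ) := by
      have := condExp_mono (m := m') (μ := P) ((integrable_const (1 : ℝ)).indicator hS)
        (integrable_const (1 : ℝ))
        (Filter.Eventually.of_forall fun ω => Set.indicator_le_self' (fun _ _ => zero_le_one) ω)
      rwa [condExp_const hm'] at this
    filter_upwards [hE0, hE1] with ω h0 h1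
    rw [Real.norm_eq_abs, abs_of_nonneg h0]; exact h1
  have hWE_int : Integrable (fun ω => W ω * E ω) P :=
    (hW_int.bdd_mul hEm.aestronglyMeasurable hEbdd).congr
      (Filter.Eventually.of_forall fun ω => mul_comm _ _)
  have hWLE_int : Integrable (fun ω => W ω * L ω * E ω) P :=
    (hWL_int.bdd_mul hEm.aestronglyMeasurable hEbdd).congr
      (Filter.Eventually.of_forall fun ω => by ring)
  set g : Ω → ℝ := fun ω => W ω * E ω / pb - 1 with hgdef
  have hg_meas : Measurable g := ((hWmb.mul hEm).div_const pb).sub measurable_const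
  have hg_l2 : MemLp g 2 P :=
    (memLp_two_iff_integrable_sq hg_meas.aestronglyMeasurable).mpr hΔfin
  have hg_int : Integrable g P := hg_l2.integrable one_le_two
  have hintg : ∫ ω, g ω ∂P = 0 := by
    rw [hgdef]
    rw [integral_sub (hWE_int.div_const pb) (integrable_const 1), integral_div, integral_const]
    simp only [probReal_univ, smul_eq_mul, one_mul]
    rw [← key2, hw1]
    ring
  set c : ℝ := ∫ ω, L ω ∂P with hc
  have hLg_int : Integrable (fun ω => L ω * g ω) P := aux_l2_mul hLsq hg_l2
  have hLcg_int : Integrable (fun ω => (L ω - c) * g ω) P :=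
    aux_l2_mul (hLsq.sub (memLp_const c)) hg_l2
  have hLc_sq_int : Integrable (fun ω => (L ω - c) ^ 2) P :=
    (hLsq.sub (memLp_const c)).integrable_sq
  have hsplit : (∫ ω, W ω * L ω * E ω ∂P) / pb = c + ∫ ω, (L ω - c) * g ω ∂P := by
    have hptw : ∀ ω, W ω * L ω * E ω / pb = L ω + L ω * g ω := by
      intro ω; rw [hgdef]; field_simp; ring
    rw [← integral_div]
    calc ∫ ω, W ω * L ω * E ω / pb ∂P = ∫ ω, (L ω + L ω * g ω) ∂P := by
          exact integral_congr_ae (Filter.Eventually.of_forall fun ω => hptw ω)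
      _ = c + ∫ ω, L ω * g ω ∂P := by rw [integral_add hLint hLg_int]
      _ = c + ∫ ω, (L ω - c) * g ω ∂P := by
          have : ∫ ω, (L ω - c) * g ω ∂P = ∫ ω, L ω * g ω ∂P - c * ∫ ω, g ω ∂P := by
            rw [← integral_const_mul, ← integral_sub hLg_int ((hg_int.const_mul c))]
            exact integral_congr_ae (Filter.Eventually.of_forall fun ω => by ring)
          rw [this, hintg]; ring
  have hyoung : |∫ ω, (L ω - c) * g ω ∂P|
      ≤ lam * (∫ ω, g ω ^ 2 ∂P) + (∫ ω, (L ω - c) ^ 2 ∂P) / (4 * lam) := by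
    have h1 : |∫ ω, (L ω - c) * g ω ∂P| ≤ ∫ ω, |(L ω - c) * g ω| ∂P := by
      simpa [Real.norm_eq_abs, abs_mul] using
        norm_integral_le_integral_norm (μ := P) (fun ω => (L ω - c) * g ω)
    have h2 : ∫ ω, |(L ω - c) * g ω| ∂P
        ≤ ∫ ω, (lam * g ω ^ 2 + (L ω - c) ^ 2 / (4 * lam)) ∂P := by
      refine integral_mono hLcg_int.abs
        ((hΔfin.const_mul lam).add (hLc_sq_int.div_const (4 * lam))) fun ω => ?_
      rw [abs_mul]
      have h4 : (0:ℝ) < 4 * lam := by linarith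
      have key : |L ω - c| * |g ω| * (4 * lam) ≤ 4 * lam ^ 2 * g ω ^ 2 + (L ω - c) ^ 2 := by
        nlinarith [sq_nonneg (|L ω - c| - 2 * lam * |g ω|), sq_abs (L ω - c), sq_abs (g ω)]
      calc |L ω - c| * |g ω| = |L ω - c| * |g ω| * (4 * lam) / (4 * lam) := by
            field_simp
        _ ≤ (4 * lam ^ 2 * g ω ^ 2 + (L ω - c) ^ 2) / (4 * lam) :=
            (div_le_div_iff_of_pos_right h4).mpr key
        _ = lam * g ω ^ 2 + (L ω - c) ^ 2 / (4 * lam) := by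
            field_simp
    have h3 : ∫ ω, (lam * g ω ^ 2 + (L ω - c) ^ 2 / (4 * lam)) ∂P
        = lam * (∫ ω, g ω ^ 2 ∂P) + (∫ ω, (L ω - c) ^ 2 ∂P) / (4 * lam) := by
      rw [integral_add (hΔfin.const_mul lam) (hLc_sq_int.div_const (4 * lam)),
        integral_const_mul, integral_div]
    linarith
  have hvar : variance L P = ∫ ω, (L ω - c) ^ 2 ∂P := by
    rw [variance_eq_integral hLsq.1.aemeasurable]
  have hmain : c = (∫ ω, W ω * L ω * S.indicator (fun _ => (1 : ℝ)) ω ∂P) / pb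
      - ∫ ω, (L ω - c) * g ω ∂P := by
    rw [key1, hsplit]; ring
  have habs : -(∫ ω, (L ω - c) * g ω ∂P) ≤ lam * (∫ ω, g ω ^ 2 ∂P)
      + (∫ ω, (L ω - c) ^ 2 ∂P) / (4 * lam) := by
    calc -(∫ ω, (L ω - c) * g ω ∂P) ≤ |∫ ω, (L ω - c) * g ω ∂P| := neg_le_abs _
      _ ≤ _ := hyoung
  have hgg : (∫ ω, (W ω * E ω / pb - 1) ^ 2 ∂P) = ∫ ω, g ω ^ 2 ∂P := rfl
  rw [hvar, hgg]
  linarith [hmain, habs]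


/-- upper bound on the X-learner loss in expectation, Proposition 5
of the paper. The treatment `T : Ω → {0,1}` is encoded as `T : Ω → Bool`
(`true ↔ a = 1`); `A b = {T = b}`, `p b = P(T = b) > 0`, `eps b = P[T=b | σ(X,U)]` is the
true propensity, each potential outcome `Y b` is conditionally independent of `1_{T=b}`
given `σ(X,U)`, `ψ ≥ 0` satisfies `ψ(x ± y) ≤ C(ψ(x)+ψ(y))`, `e : 𝓧 → ℝ` is the
X-learner weighting function, `τ¹, τ⁰` the pseudo-effect regressions, the weights satisfy
`E[w b (X) | T=b] = 1`, the four component losses `L₁, L₀, L₁₀, L₀₁` are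
square-integrable, and `Δ b = E[(w b (X)·eps b / p b − 1)²] < ∞`. Then for all
`λ₁, λ₀, λ₁₀, λ₀₁ > 0` the stated bound holds. -/
theorem stmt_13 {Ω 𝓧 𝓤 : Type*} [MeasurableSpace Ω] [StandardBorelSpace Ω]
    [MeasurableSpace 𝓧] [MeasurableSpace 𝓤]
    (P : Measure Ω) [IsProbabilityMeasure P]
    (X : Ω → 𝓧) (U : Ω → 𝓤) (Y : Bool → Ω → ℝ)
    (hX : Measurable X) (hU : Measurable U) (hY : ∀ b, Measurable (Y b))
    (T : Ω → Bool) (hT : Measurable T)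
    (A : Bool → Set Ω) (hA : A = fun b => {ω | T ω = b})
    (p : Bool → ℝ) (hp : ∀ b, p b = (P (A b)).toReal) (hppos : ∀ b, 0 < p b)
    (eps : Bool → Ω → ℝ)
    (heps : ∀ b, eps b = P[(A b).indicator (fun _ => (1 : ℝ)) |
      MeasurableSpace.comap (fun ω => (X ω, U ω)) inferInstance])
    (hind : ∀ b, CondIndepFun (MeasurableSpace.comap (fun ω => (X ω, U ω)) inferInstance)
      ((hX.prodMk hU).comap_le) (Y b) ((A b).indicator fun _ => (1 : ℝ)) P)
    (ψ : ℝ → ℝ) (hψ0 : ∀ x, 0 ≤ ψ x) (hψm : Measurable ψ)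
    (C : ℝ) (hC : 0 < C)
    (hadd : ∀ x y : ℝ, ψ (x + y) ≤ C * (ψ x + ψ y))
    (hsub : ∀ x y : ℝ, ψ (x - y) ≤ C * (ψ x + ψ y))
    (h : Bool → 𝓧 → ℝ) (hh : ∀ b, Measurable (h b))
    (τ : Bool → 𝓧 → ℝ) (hτ : ∀ b, Measurable (τ b))
    (e : 𝓧 → ℝ) (he : Measurable e)
    (w : Bool → 𝓧 → ℝ) (hwm : ∀ b, Measurable (w b)) (hw0 : ∀ b x, 0 ≤ w b x)
    (Cw : ℝ) (hwb : ∀ b x, w b x ≤ Cw)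
    (hw1 : ∀ b, (∫ ω, w b (X ω) * (A b).indicator (fun _ => (1 : ℝ)) ω ∂P) / p b = 1)
    (L1 L0 L10 L01 : Ω → ℝ)
    (hL1 : L1 = fun ω => ψ ((1 - e (X ω)) * (Y true ω - h true (X ω))))
    (hL0 : L0 = fun ω => ψ (e (X ω) * (Y false ω - h false (X ω))))
    (hL10 : L10 = fun ω => ψ (e (X ω) * (τ true (X ω) - (Y true ω - h false (X ω)))))
    (hL01 : L01 = fun ω => ψ ((1 - e (X ω)) * (τ false (X ω) - (h true (X ω) - Y false ω))))
    (hL1sq : MemLp L1 2 P) (hL0sq : MemLp L0 2 P)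
    (hL10sq : MemLp L10 2 P) (hL01sq : MemLp L01 2 P)
    (Δ : Bool → ℝ) (hΔ : ∀ b, Δ b = ∫ ω, (w b (X ω) * eps b ω / p b - 1) ^ 2 ∂P)
    (hΔfin : ∀ b, Integrable (fun ω => (w b (X ω) * eps b ω / p b - 1) ^ 2) P)
    (lam1 lam0 lam10 lam01 : ℝ)
    (hlam1 : 0 < lam1) (hlam0 : 0 < lam0) (hlam10 : 0 < lam10) (hlam01 : 0 < lam01) :
    ∫ ω, ψ (Y true ω - Y false ω
        - (e (X ω) * τ true (X ω) + (1 - e (X ω)) * τ false (X ω))) ∂P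
      ≤ C ^ 2 * ((∫ ω, w true (X ω) * L1 ω * (A true).indicator (fun _ => (1 : ℝ)) ω ∂P)
            / p true
          + (∫ ω, w false (X ω) * L0 ω * (A false).indicator (fun _ => (1 : ℝ)) ω ∂P)
            / p false
          + (∫ ω, w true (X ω) * L10 ω * (A true).indicator (fun _ => (1 : ℝ)) ω ∂P)
            / p true
          + (∫ ω, w false (X ω) * L01 ω * (A false).indicator (fun _ => (1 : ℝ)) ω ∂P)
            / p false
          + (lam1 + lam10) * Δ true + (lam0 + lam01) * Δ false
          + variance L1 P / (4 * lam1) + variance L0 P / (4 * lam0)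
          + variance L10 P / (4 * lam10) + variance L01 P / (4 * lam01)) := by
    classical
  subst hA hL1 hL0 hL10 hL01
  have hm'le : MeasurableSpace.comap (fun ω => (X ω, U ω)) inferInstance ≤ _ :=
    (hX.prodMk hU).comap_le
  have hXm' : Measurable[MeasurableSpace.comap (fun ω => (X ω, U ω)) inferInstance] X :=
    measurable_fst.comp (Measurable.of_comap_le le_rfl)
  have hSb : ∀ b, MeasurableSet {ω | T ω = b} := fun b => hT (measurableSet_singleton b)
  -- generic per-term bound
  have bound : ∀ (b : Bool) (L : Ω → ℝ) (lam : ℝ), 0 < lam →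
      Measurable[MeasurableSpace.comap (fun ω => (X ω, U ω)) inferInstance ⊔
        MeasurableSpace.comap (Y b) inferInstance] L →
      (∀ ω, 0 ≤ L ω) → MemLp L 2 P →
      ∫ ω, L ω ∂P
        ≤ (∫ ω, w b (X ω) * L ω * ({ω | T ω = b} : Set Ω).indicator (fun _ => (1:ℝ)) ω ∂P) / p b
          + lam * Δ b + variance L P / (4 * lam) := by
    intro b L lam hlam hLm hL0' hLsq'
    have hΔ' : Integrable (fun ω =>
        (w b (X ω) * (P[({ω | T ω = b} : Set Ω).indicator (fun _ => (1:ℝ)) |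
          MeasurableSpace.comap (fun ω => (X ω, U ω)) inferInstance]) ω / p b - 1) ^ 2) P := by
      have h := hΔfin b
      rwa [heps b] at h
    have h := aux_term (W := fun ω => w b (X ω)) P hm'le (hSb b) (hY b) (hind b)
      ((hwm b).comp hXm') (fun ω => hw0 b (X ω)) (fun ω => hwb b (X ω))
      hLm hL0' hLsq' (hppos b) (hw1 b) hΔ' hlam
    rw [hΔ b, heps b]
    exact h
  -- measurability of the four losses
  have hXMb : ∀ b : Bool, Measurable[MeasurableSpace.comap (fun ω => (X ω, U ω)) inferInstance ⊔
      MeasurableSpace.comap (Y b) inferInstance] X :=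
    fun b => hXm'.mono le_sup_left le_rfl
  have hYMb : ∀ b : Bool, Measurable[MeasurableSpace.comap (fun ω => (X ω, U ω)) inferInstance ⊔
      MeasurableSpace.comap (Y b) inferInstance] (Y b) :=
    fun b => (Measurable.of_comap_le le_rfl).mono le_sup_right le_rfl
  have hM1 : Measurable[MeasurableSpace.comap (fun ω => (X ω, U ω)) inferInstance ⊔
      MeasurableSpace.comap (Y true) inferInstance]
      (fun ω => ψ ((1 - e (X ω)) * (Y true ω - h true (X ω)))) :=
    hψm.comp ((measurable_const.sub (he.comp (hXMb true))).mul
      ((hYMb true).sub ((hh true).comp (hXMb true))))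
  have hM0 : Measurable[MeasurableSpace.comap (fun ω => (X ω, U ω)) inferInstance ⊔
      MeasurableSpace.comap (Y false) inferInstance]
      (fun ω => ψ (e (X ω) * (Y false ω - h false (X ω)))) :=
    hψm.comp ((he.comp (hXMb false)).mul
      ((hYMb false).sub ((hh false).comp (hXMb false))))
  have hM10 : Measurable[MeasurableSpace.comap (fun ω => (X ω, U ω)) inferInstance ⊔
      MeasurableSpace.comap (Y true) inferInstance]
      (fun ω => ψ (e (X ω) * (τ true (X ω) - (Y true ω - h false (X ω))))) :=
    hψm.comp ((he.comp (hXMb true)).mul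
      (((hτ true).comp (hXMb true)).sub ((hYMb true).sub ((hh false).comp (hXMb true)))))
  have hM01 : Measurable[MeasurableSpace.comap (fun ω => (X ω, U ω)) inferInstance ⊔
      MeasurableSpace.comap (Y false) inferInstance]
      (fun ω => ψ ((1 - e (X ω)) * (τ false (X ω) - (h true (X ω) - Y false ω)))) :=
    hψm.comp ((measurable_const.sub (he.comp (hXMb false))).mul
      (((hτ false).comp (hXMb false)).sub (((hh true).comp (hXMb false)).sub (hYMb false))))
  -- the four per-term bounds
  have hb1 := bound true _ lam1 hlam1 hM1 (fun ω => hψ0 _) hL1sq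
  have hb0 := bound false _ lam0 hlam0 hM0 (fun ω => hψ0 _) hL0sq
  have hb10 := bound true _ lam10 hlam10 hM10 (fun ω => hψ0 _) hL10sq
  have hb01 := bound false _ lam01 hlam01 hM01 (fun ω => hψ0 _) hL01sq
  -- pointwise decomposition bound
  have hpt : ∀ ω, ψ (Y true ω - Y false ω
      - (e (X ω) * τ true (X ω) + (1 - e (X ω)) * τ false (X ω)))
      ≤ C ^ 2 * (ψ ((1 - e (X ω)) * (Y true ω - h true (X ω)))
        + ψ (e (X ω) * (Y false ω - h false (X ω)))
        + ψ (e (X ω) * (τ true (X ω) - (Y true ω - h false (X ω))))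
        + ψ ((1 - e (X ω)) * (τ false (X ω) - (h true (X ω) - Y false ω)))) := by
    intro ω
    have hkey : Y true ω - Y false ω
        - (e (X ω) * τ true (X ω) + (1 - e (X ω)) * τ false (X ω))
        = ((1 - e (X ω)) * (Y true ω - h true (X ω))
            - e (X ω) * (Y false ω - h false (X ω)))
          - (e (X ω) * (τ true (X ω) - (Y true ω - h false (X ω)))
            + (1 - e (X ω)) * (τ false (X ω) - (h true (X ω) - Y false ω))) := by ring
    rw [hkey]
    calc ψ (((1 - e (X ω)) * (Y true ω - h true (X ω))
            - e (X ω) * (Y false ω - h false (X ω)))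
          - (e (X ω) * (τ true (X ω) - (Y true ω - h false (X ω)))
            + (1 - e (X ω)) * (τ false (X ω) - (h true (X ω) - Y false ω))))
        ≤ C * (ψ ((1 - e (X ω)) * (Y true ω - h true (X ω))
            - e (X ω) * (Y false ω - h false (X ω)))
          + ψ (e (X ω) * (τ true (X ω) - (Y true ω - h false (X ω)))
            + (1 - e (X ω)) * (τ false (X ω) - (h true (X ω) - Y false ω)))) := hsub _ _
      _ ≤ C * ((C * (ψ ((1 - e (X ω)) * (Y true ω - h true (X ω)))
            + ψ (e (X ω) * (Y false ω - h false (X ω)))))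
          + (C * (ψ (e (X ω) * (τ true (X ω) - (Y true ω - h false (X ω))))
            + ψ ((1 - e (X ω)) * (τ false (X ω) - (h true (X ω) - Y false ω)))))) :=
          mul_le_mul_of_nonneg_left (add_le_add (hsub _ _) (hadd _ _)) hC.le
      _ = C ^ 2 * (ψ ((1 - e (X ω)) * (Y true ω - h true (X ω)))
          + ψ (e (X ω) * (Y false ω - h false (X ω)))
          + ψ (e (X ω) * (τ true (X ω) - (Y true ω - h false (X ω))))
          + ψ ((1 - e (X ω)) * (τ false (X ω) - (h true (X ω) - Y false ω)))) := by ring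
  -- integrate the pointwise bound
  have hint1 : Integrable (fun ω => ψ ((1 - e (X ω)) * (Y true ω - h true (X ω)))) P :=
    hL1sq.integrable one_le_two
  have hint0 : Integrable (fun ω => ψ (e (X ω) * (Y false ω - h false (X ω)))) P :=
    hL0sq.integrable one_le_two
  have hint10 : Integrable
      (fun ω => ψ (e (X ω) * (τ true (X ω) - (Y true ω - h false (X ω))))) P :=
    hL10sq.integrable one_le_two
  have hint01 : Integrable
      (fun ω => ψ ((1 - e (X ω)) * (τ false (X ω) - (h true (X ω) - Y false ω)))) P :=
    hL01sq.integrable one_le_two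
  have hGint : Integrable (fun ω => C ^ 2 * (ψ ((1 - e (X ω)) * (Y true ω - h true (X ω)))
      + ψ (e (X ω) * (Y false ω - h false (X ω)))
      + ψ (e (X ω) * (τ true (X ω) - (Y true ω - h false (X ω))))
      + ψ ((1 - e (X ω)) * (τ false (X ω) - (h true (X ω) - Y false ω))))) P :=
    (((hint1.add hint0).add hint10).add hint01).const_mul _
  have hstep : ∫ ω, ψ (Y true ω - Y false ω
      - (e (X ω) * τ true (X ω) + (1 - e (X ω)) * τ false (X ω))) ∂P
      ≤ C ^ 2 * ((∫ ω, ψ ((1 - e (X ω)) * (Y true ω - h true (X ω))) ∂P)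
        + (∫ ω, ψ (e (X ω) * (Y false ω - h false (X ω))) ∂P)
        + (∫ ω, ψ (e (X ω) * (τ true (X ω) - (Y true ω - h false (X ω)))) ∂P)
        + (∫ ω, ψ ((1 - e (X ω)) * (τ false (X ω) - (h true (X ω) - Y false ω))) ∂P)) := by
    have hmono := integral_mono_of_nonneg (μ := P)
      (Filter.Eventually.of_forall fun ω => hψ0 _) hGint
      (Filter.Eventually.of_forall hpt)
    calc ∫ ω, ψ (Y true ω - Y false ω
          - (e (X ω) * τ true (X ω) + (1 - e (X ω)) * τ false (X ω))) ∂P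
        ≤ ∫ ω, C ^ 2 * (ψ ((1 - e (X ω)) * (Y true ω - h true (X ω)))
          + ψ (e (X ω) * (Y false ω - h false (X ω)))
          + ψ (e (X ω) * (τ true (X ω) - (Y true ω - h false (X ω))))
          + ψ ((1 - e (X ω)) * (τ false (X ω) - (h true (X ω) - Y false ω)))) ∂P := hmono
      _ = _ := by
          have i2 : Integrable (fun ω => ψ ((1 - e (X ω)) * (Y true ω - h true (X ω)))
              + ψ (e (X ω) * (Y false ω - h false (X ω)))) P := hint1.add hint0
          have i3 : Integrable (fun ω => ψ ((1 - e (X ω)) * (Y true ω - h true (X ω)))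
              + ψ (e (X ω) * (Y false ω - h false (X ω)))
              + ψ (e (X ω) * (τ true (X ω) - (Y true ω - h false (X ω))))) P := i2.add hint10
          rw [integral_const_mul, integral_add i3 hint01, integral_add i2 hint10,
            integral_add hint1 hint0]
  refine hstep.trans ?_
  have hfinal := add_le_add (add_le_add (add_le_add hb1 hb0) hb10) hb01
  refine (mul_le_mul_of_nonneg_left hfinal (sq_nonneg C)).trans (le_of_eq ?_)
  ring
end

section
/- On a probability space (Ω, F, P), let X : Ω → 𝒳, U : Ω → 𝒰, and Y : Ω → ℝ be measurable random variables, let A ∈ F be an event with p := P(A) > 0, let e := E[1_A | σ(X,U)], and assume Y and 1_A are conditionally independent given σ(X,U). Let ℓ : ℝ × ℝ → [0, M] be a measurable loss bounded by M > 0, h : 𝒳 → ℝ measurable, and w : 𝒳 → [0,∞) a bounded measurable weight with E[w(X) | A] = 1. Write L := ℓ(Y, h(X)) and assume Δ := E[(w(X)·e/p − 1)²] < ∞. Then for every λ > 0, E[L] ≤ E[w(X)·L | A] + λ·Δ + M²/(16λ). -/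
open MeasureTheory ProbabilityTheory
open scoped ENNReal NNReal

set_option maxHeartbeats 1000000 in
private theorem aux16 {Ω 𝓧 𝓤 : Type*} {m : MeasurableSpace Ω}
    [mΩ : MeasurableSpace Ω] [StandardBorelSpace Ω]
    [MeasurableSpace 𝓧] [MeasurableSpace 𝓤]
    (P : Measure Ω) [IsProbabilityMeasure P]
    (X : Ω → 𝓧) (U : Ω → 𝓤) (Y : Ω → ℝ)
    (hX : Measurable X) (hU : Measurable U) (hY : Measurable Y)
    (A : Set Ω) (hA : MeasurableSet A)
    (p : ℝ) (hppos : 0 < p)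
    (e : Ω → ℝ)
    (hm : m ≤ mΩ)
    (hmdef : m = MeasurableSpace.comap (fun ω => (X ω, U ω)) inferInstance)
    (he : e = P[A.indicator (fun _ => (1 : ℝ)) | m])
    (hind : CondIndepFun m hm Y (A.indicator fun _ => (1 : ℝ)) P)
    (M : ℝ) (hM : 0 < M)
    (ℓ : ℝ × ℝ → ℝ) (hℓm : Measurable ℓ) (hℓ0 : ∀ z, 0 ≤ ℓ z) (hℓM : ∀ z, ℓ z ≤ M)
    (h : 𝓧 → ℝ) (hh : Measurable h)
    (w : 𝓧 → ℝ) (hwm : Measurable w) (hw0 : ∀ x, 0 ≤ w x) (Cw : ℝ) (hwb : ∀ x, w x ≤ Cw)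
    (hw1 : (∫ ω, w (X ω) * A.indicator (fun _ => (1 : ℝ)) ω ∂P) / p = 1)
    (L : Ω → ℝ) (hL : L = fun ω => ℓ (Y ω, h (X ω)))
    (Δ : ℝ) (hΔ : Δ = ∫ ω, (w (X ω) * e ω / p - 1) ^ 2 ∂P)
    (hΔfin : Integrable (fun ω => (w (X ω) * e ω / p - 1) ^ 2) P)
    (lam : ℝ) (hlam : 0 < lam) :
    ∫ ω, L ω ∂P
      ≤ (∫ ω, w (X ω) * L ω * A.indicator (fun _ => (1 : ℝ)) ω ∂P) / p
        + lam * Δ + M ^ 2 / (16 * lam) := by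
  classical
  set Z : Ω → ℝ := A.indicator (fun _ => (1 : ℝ)) with hZdef
  have hZmeas : Measurable Z := measurable_const.indicator hA
  -- bounded measurable functions are integrable
  have intBdd : ∀ (f : Ω → ℝ) (C : ℝ), Measurable f → (∀ᵐ ω ∂P, |f ω| ≤ C) →
      Integrable f P := by
    intro f C hf hb
    exact ⟨hf.aestronglyMeasurable,
      HasFiniteIntegral.of_bounded (C := C) (by simpa [Real.norm_eq_abs] using hb)⟩
  have hZ01 : ∀ ω, 0 ≤ Z ω ∧ Z ω ≤ 1 := by
    intro ω
    by_cases hω : ω ∈ A <;> simp [hZdef, Set.indicator_apply, hω]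
  have hZint : Integrable Z P := by
    refine intBdd Z 1 hZmeas (Filter.Eventually.of_forall fun ω => ?_)
    have := hZ01 ω
    rw [abs_le]; constructor <;> linarith [this.1, this.2]
  have heMeas : Measurable e := by
    rw [he]; exact (stronglyMeasurable_condExp.mono hm).measurable
  have eSM : StronglyMeasurable[m] e := he ▸ stronglyMeasurable_condExp
  have he0 : ∀ᵐ ω ∂P, 0 ≤ e ω := by
    rw [he]
    exact condExp_nonneg (Filter.Eventually.of_forall fun ω => (hZ01 ω).1)
  have he1 : ∀ᵐ ω ∂P, e ω ≤ 1 := by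
    have hmono := condExp_mono (m := m) (μ := P) hZint (integrable_const (1 : ℝ))
      (Filter.Eventually.of_forall fun ω => (hZ01 ω).2)
    rw [condExp_const hm (1 : ℝ)] at hmono
    rw [he]
    exact hmono
  have hebd : ∀ᵐ ω ∂P, |e ω| ≤ 1 := by
    filter_upwards [he0, he1] with ω h0 h1
    rw [abs_le]; exact ⟨by linarith, h1⟩
  have heInt : Integrable e P := intBdd e 1 heMeas hebd
  -- conditional independence: condexp of intersection
  have hZpre : Z ⁻¹' {1} = A := by
    ext ω
    by_cases hω : ω ∈ A <;> simp [hZdef, Set.indicator_apply, hω]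
  have hci := (condIndepFun_iff_condExp_inter_preimage_eq_mul (μ := P) hY hZmeas).mp hind
  have hcond : ∀ s : Set ℝ, MeasurableSet s →
      (P⟦Y ⁻¹' s ∩ A | m⟧) =ᵐ[P] fun ω => (P⟦Y ⁻¹' s | m⟧) ω * e ω := by
    intro s hs
    have hh1 := hci s {1} hs (measurableSet_singleton 1)
    rw [hZpre] at hh1
    rw [he]
    exact hh1
  -- the core set-integral identity
  have core : ∀ (s : Set ℝ), MeasurableSet s → ∀ (T : Set Ω), MeasurableSet[m] T →
      (P (Y ⁻¹' s ∩ T ∩ A)).toReal = ∫ ω in Y ⁻¹' s ∩ T, e ω ∂P := by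
    intro s hs T hT
    set S := Y ⁻¹' s with hSdef
    have hSm : MeasurableSet S := hY hs
    have hTm : MeasurableSet T := hm T hT
    have hindSA : Integrable ((S ∩ A).indicator fun _ => (1 : ℝ)) P := by
      refine intBdd _ 1 (measurable_const.indicator (hSm.inter hA))
        (Filter.Eventually.of_forall fun ω => ?_)
      by_cases hω : ω ∈ S ∩ A <;> simp [Set.indicator_apply, hω]
    have hindS : Integrable (S.indicator fun _ => (1 : ℝ)) P := by
      refine intBdd _ 1 (measurable_const.indicator hSm)
        (Filter.Eventually.of_forall fun ω => ?_)
      by_cases hω : ω ∈ S <;> simp [Set.indicator_apply, hω]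
    have hindeS : Integrable (e * S.indicator fun _ => (1 : ℝ)) P := by
      refine intBdd _ 1 (heMeas.mul (measurable_const.indicator hSm)) ?_
      filter_upwards [hebd] with ω hω
      by_cases hωS : ω ∈ S <;>
        simp only [Pi.mul_apply, Set.indicator_apply, hωS, if_pos, if_neg, mul_one, mul_zero,
          if_true, if_false]
      · exact hω
      · simp
    have e1 : (P (S ∩ T ∩ A)).toReal
        = ∫ ω in T, (S ∩ A).indicator (fun _ => (1 : ℝ)) ω ∂P := by
      rw [setIntegral_indicator (hSm.inter hA), setIntegral_const, smul_eq_mul, mul_one]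
      congr 2
      rw [Set.inter_comm S T, Set.inter_assoc]
    have e2 : ∫ ω in T, (S ∩ A).indicator (fun _ => (1 : ℝ)) ω ∂P
        = ∫ ω in T, (P⟦S ∩ A | m⟧) ω ∂P := (setIntegral_condExp hm hindSA hT).symm
    have e3 : ∫ ω in T, (P⟦S ∩ A | m⟧) ω ∂P = ∫ ω in T, (P⟦S | m⟧) ω * e ω ∂P :=
      setIntegral_congr_ae hTm ((hcond s hs).mono fun ω hω _ => hω)
    have e4 : P[(e * S.indicator fun _ => (1 : ℝ)) | m]
        =ᵐ[P] fun ω => e ω * (P⟦S | m⟧) ω :=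
      condExp_mul_of_stronglyMeasurable_left eSM hindeS hindS
    have e5 : ∫ ω in T, (P⟦S | m⟧) ω * e ω ∂P
        = ∫ ω in T, (e * S.indicator fun _ => (1 : ℝ)) ω ∂P := by
      rw [← setIntegral_condExp hm hindeS hT]
      refine setIntegral_congr_ae hTm (e4.mono fun ω hω _ => ?_)
      rw [hω, mul_comm]
    have e6 : ∫ ω in T, (e * S.indicator fun _ => (1 : ℝ)) ω ∂P
        = ∫ ω in S ∩ T, e ω ∂P := by
      have hfun : ∀ ω, (e * S.indicator fun _ => (1 : ℝ)) ω = S.indicator e ω := by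
        intro ω
        by_cases hω : ω ∈ S <;> simp [Set.indicator_apply, hω]
      simp_rw [hfun]
      rw [setIntegral_indicator hSm, Set.inter_comm]
    rw [e1, e2, e3, e5, e6]
  -- the two pushforward measures agree
  set V : Ω → ℝ × 𝓧 × 𝓤 := fun ω => (Y ω, (X ω, U ω)) with hVdef
  have hV : Measurable V := hY.prodMk (hX.prodMk hU)
  set e' : Ω → ℝ≥0 := fun ω => (e ω).toNNReal with he'def
  have he'm : Measurable e' := measurable_real_toNNReal.comp heMeas
  haveI : IsFiniteMeasure (Measure.map V (P.restrict A)) := Measure.isFiniteMeasure_map _ _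
  have rect : ∀ C ∈ Set.image2 (· ×ˢ ·) {s : Set ℝ | MeasurableSet s}
      {t : Set (𝓧 × 𝓤) | MeasurableSet t},
      Measure.map V (P.restrict A) C
        = Measure.map V (P.withDensity fun ω => (e' ω : ℝ≥0∞)) C := by
    rintro _ ⟨s, hs, B, hB, rfl⟩
    have hs' : MeasurableSet s := hs
    have hB' : MeasurableSet B := hB
    have hpre : V ⁻¹' (s ×ˢ B) = Y ⁻¹' s ∩ ((fun ω => (X ω, U ω)) ⁻¹' B) := rfl
    have hTmm : MeasurableSet[m] ((fun ω => (X ω, U ω)) ⁻¹' B) := hmdef ▸ ⟨B, hB', rfl⟩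
    have hSTm : MeasurableSet (V ⁻¹' (s ×ˢ B)) := hV (hs'.prod hB')
    rw [Measure.map_apply hV (hs'.prod hB'), Measure.map_apply hV (hs'.prod hB'),
      Measure.restrict_apply hSTm, withDensity_apply _ hSTm, hpre]
    have hint : Integrable e (P.restrict (Y ⁻¹' s ∩ ((fun ω => (X ω, U ω)) ⁻¹' B))) :=
      heInt.restrict
    have hnn : 0 ≤ᵐ[P.restrict (Y ⁻¹' s ∩ ((fun ω => (X ω, U ω)) ⁻¹' B))] e :=
      ae_restrict_of_ae he0
    rw [← ENNReal.ofReal_toReal (measure_ne_top P _), core s hs' _ hTmm,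
      ofReal_integral_eq_lintegral_ofReal hint hnn]
    rfl
  have hmeq : Measure.map V (P.restrict A)
      = Measure.map V (P.withDensity fun ω => (e' ω : ℝ≥0∞)) := by
    refine ext_of_generate_finite _ generateFrom_prod.symm isPiSystem_prod rect ?_
    rw [← Set.univ_prod_univ]
    exact rect _ ⟨Set.univ, Set.mem_setOf.mpr MeasurableSet.univ, Set.univ,
      Set.mem_setOf.mpr MeasurableSet.univ, rfl⟩
  -- key identity for bounded measurable G
  have key : ∀ G : ℝ × 𝓧 × 𝓤 → ℝ, Measurable G →
      ∫ ω, G (V ω) * Z ω ∂P = ∫ ω, G (V ω) * e ω ∂P := by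
    intro G hG
    have h1 : ∀ ω, G (V ω) * Z ω = A.indicator (fun ω => G (V ω)) ω := by
      intro ω
      by_cases hω : ω ∈ A <;> simp [hZdef, Set.indicator_apply, hω]
    calc ∫ ω, G (V ω) * Z ω ∂P = ∫ ω, A.indicator (fun ω => G (V ω)) ω ∂P := by
          simp_rw [h1]
      _ = ∫ ω in A, G (V ω) ∂P := integral_indicator hA
      _ = ∫ z, G z ∂(Measure.map V (P.restrict A)) :=
          (integral_map hV.aemeasurable hG.aestronglyMeasurable).symm
      _ = ∫ z, G z ∂(Measure.map V (P.withDensity fun ω => (e' ω : ℝ≥0∞))) := by rw [hmeq]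
      _ = ∫ ω, G (V ω) ∂(P.withDensity fun ω => (e' ω : ℝ≥0∞)) :=
          integral_map hV.aemeasurable hG.aestronglyMeasurable
      _ = ∫ ω, (e' ω : ℝ) • G (V ω) ∂P := integral_withDensity_eq_integral_smul he'm _
      _ = ∫ ω, G (V ω) * e ω ∂P := by
          refine integral_congr_ae (he0.mono fun ω hω => ?_)
          simp [he'def, Real.coe_toNNReal _ hω, mul_comm]
  -- apply the key identity
  have hkey1 : ∫ ω, w (X ω) * L ω * Z ω ∂P = ∫ ω, w (X ω) * L ω * e ω ∂P := by
    have hG : Measurable fun z : ℝ × 𝓧 × 𝓤 => w z.2.1 * ℓ (z.1, h z.2.1) :=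
      (hwm.comp (measurable_fst.comp measurable_snd)).mul
        (hℓm.comp (measurable_fst.prodMk (hh.comp (measurable_fst.comp measurable_snd))))
    have := key _ hG
    simpa [hL] using this
  have hkey2 : ∫ ω, w (X ω) * Z ω ∂P = ∫ ω, w (X ω) * e ω ∂P := by
    have hG : Measurable fun z : ℝ × 𝓧 × 𝓤 => w z.2.1 :=
      hwm.comp (measurable_fst.comp measurable_snd)
    exact key _ hG
  -- arithmetic part
  set φ : Ω → ℝ := fun ω => w (X ω) * e ω / p with hφdef
  have hwabs : ∀ x, |w x| ≤ |Cw| := by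
    intro x
    rw [abs_of_nonneg (hw0 x)]
    exact le_trans (hwb x) (le_abs_self Cw)
  have hφmeas : Measurable φ := ((hwm.comp hX).mul heMeas).div_const p
  have hφbd : ∀ᵐ ω ∂P, |φ ω| ≤ |Cw| / p := by
    filter_upwards [hebd] with ω hω
    have hnum : |w (X ω) * e ω| ≤ |Cw| := by
      rw [abs_mul]
      calc |w (X ω)| * |e ω| ≤ |Cw| * 1 :=
            mul_le_mul (hwabs _) hω (abs_nonneg _) (abs_nonneg _)
        _ = |Cw| := mul_one _
    have : |φ ω| = |w (X ω) * e ω| / p := by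
      rw [hφdef]
      simp only []
      rw [abs_div, abs_of_pos hppos]
    rw [this]
    exact (div_le_div_iff_of_pos_right hppos).2 hnum
  have hφint : Integrable φ P := intBdd φ (|Cw| / p) hφmeas hφbd
  have hLmeas : Measurable L := by
    rw [hL]; exact hℓm.comp (hY.prodMk (hh.comp hX))
  have hL0 : ∀ ω, 0 ≤ L ω := by intro ω; rw [hL]; exact hℓ0 _
  have hLM : ∀ ω, L ω ≤ M := by intro ω; rw [hL]; exact hℓM _
  have hLint : Integrable L P := by
    refine intBdd L M hLmeas (Filter.Eventually.of_forall fun ω => ?_)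
    rw [abs_le]; exact ⟨by linarith [hL0 ω, hM], hLM ω⟩
  have hLφint : Integrable (fun ω => L ω * φ ω) P :=
    hφint.bdd_mul hLmeas.aestronglyMeasurable
      (c := M) (Filter.Eventually.of_forall fun ω => by rw [Real.norm_eq_abs, abs_le]; exact ⟨by linarith [hL0 ω, hM], hLM ω⟩)
  have hΔfin' : Integrable (fun ω => (φ ω - 1) ^ 2) P := by
    rw [hφdef]; exact hΔfin
  have hΔ' : Δ = ∫ ω, (φ ω - 1) ^ 2 ∂P := by rw [hΔ, hφdef]
  -- ∫ φ = 1
  have hwZp : ∫ ω, w (X ω) * Z ω ∂P = p := by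
    rw [div_eq_one_iff_eq (ne_of_gt hppos)] at hw1
    exact hw1
  have hφ1 : ∫ ω, φ ω ∂P = 1 := by
    have h1 : ∫ ω, φ ω ∂P = (∫ ω, w (X ω) * e ω ∂P) / p := by
      rw [hφdef, integral_div]
    rw [h1, ← hkey2, hwZp, div_self (ne_of_gt hppos)]
  -- pointwise inequality
  have hpt : ∀ ω, L ω - L ω * φ ω - lam * (φ ω - 1) ^ 2 - M / 2 * (1 - φ ω)
      ≤ M ^ 2 / (16 * lam) := by
    intro ω
    have h16 : (0 : ℝ) < 16 * lam := by linarith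
    rw [le_div_iff₀ h16]
    nlinarith [sq_nonneg (4 * lam * (1 - φ ω) - (2 * L ω - M)),
      mul_nonneg (hL0 ω) (sub_nonneg.2 (hLM ω)), hlam.le, sq_nonneg (φ ω - 1)]
  -- integrate it
  have I1 : Integrable (fun ω => L ω - L ω * φ ω) P := hLint.sub hLφint
  have I1b : Integrable (fun ω => lam * (φ ω - 1) ^ 2) P := hΔfin'.const_mul lam
  have I2 : Integrable (fun ω => L ω - L ω * φ ω - lam * (φ ω - 1) ^ 2) P := I1.sub I1b
  have I3 : Integrable (fun ω => (1 : ℝ) - φ ω) P := (integrable_const 1).sub hφint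
  have I4 : Integrable (fun ω => M / 2 * (1 - φ ω)) P := I3.const_mul (M / 2)
  have hRint : Integrable
      (fun ω => L ω - L ω * φ ω - lam * (φ ω - 1) ^ 2 - M / 2 * (1 - φ ω)) P := I2.sub I4
  have hmono := integral_mono hRint (integrable_const (M ^ 2 / (16 * lam))) hpt
  have hint1 : ∫ ω, (L ω - L ω * φ ω - lam * (φ ω - 1) ^ 2 - M / 2 * (1 - φ ω)) ∂P
      = (∫ ω, L ω ∂P) - (∫ ω, L ω * φ ω ∂P) - lam * Δ := by
    rw [integral_sub I2 I4, integral_sub I1 I1b, integral_sub hLint hLφint,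
      integral_const_mul, integral_const_mul,
      integral_sub (integrable_const (1 : ℝ)) hφint, hφ1, ← hΔ']
    simp [measure_univ]
  have hconst' : ∫ _ω, (M ^ 2 / (16 * lam) : ℝ) ∂P = M ^ 2 / (16 * lam) := by
    simp [measure_univ]
  rw [hint1, hconst'] at hmono
  have hLφ : ∫ ω, L ω * φ ω ∂P = (∫ ω, w (X ω) * L ω * Z ω ∂P) / p := by
    rw [hkey1, ← integral_div]
    refine integral_congr_ae (Filter.Eventually.of_forall fun ω => ?_)
    rw [hφdef]
    ring
  rw [hLφ] at hmono
  linarith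

/-- population-level inequality behind the PAC bound for outcome
regression. Under conditional independence of `Y` and `1_A` given `σ(X,U)`, for a
measurable loss `ℓ` with values in `[0, M]` (`M > 0`), measurable `h`, and a bounded
nonnegative weight `w` with `E[w(X) | A] = 1`, writing `L = ℓ(Y, h(X))` and
`Δ = E[(w(X)·e/p − 1)²] < ∞`, for every `λ > 0` we have
`E[L] ≤ E[w(X)·L | A] + λ·Δ + M²/(16λ)`. -/
theorem stmt_16 {Ω 𝓧 𝓤 : Type*} [MeasurableSpace Ω] [StandardBorelSpace Ω]
    [MeasurableSpace 𝓧] [MeasurableSpace 𝓤]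
    (P : Measure Ω) [IsProbabilityMeasure P]
    (X : Ω → 𝓧) (U : Ω → 𝓤) (Y : Ω → ℝ)
    (hX : Measurable X) (hU : Measurable U) (hY : Measurable Y)
    (A : Set Ω) (hA : MeasurableSet A)
    (p : ℝ) (hp : p = (P A).toReal) (hppos : 0 < p)
    (e : Ω → ℝ)
    (he : e = P[A.indicator (fun _ => (1 : ℝ)) |
      MeasurableSpace.comap (fun ω => (X ω, U ω)) inferInstance])
    (hind : CondIndepFun (MeasurableSpace.comap (fun ω => (X ω, U ω)) inferInstance)
      ((hX.prodMk hU).comap_le) Y (A.indicator fun _ => (1 : ℝ)) P)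
    (M : ℝ) (hM : 0 < M)
    (ℓ : ℝ × ℝ → ℝ) (hℓm : Measurable ℓ) (hℓ0 : ∀ z, 0 ≤ ℓ z) (hℓM : ∀ z, ℓ z ≤ M)
    (h : 𝓧 → ℝ) (hh : Measurable h)
    (w : 𝓧 → ℝ) (hwm : Measurable w) (hw0 : ∀ x, 0 ≤ w x) (Cw : ℝ) (hwb : ∀ x, w x ≤ Cw)
    (hw1 : (∫ ω, w (X ω) * A.indicator (fun _ => (1 : ℝ)) ω ∂P) / p = 1)
    (L : Ω → ℝ) (hL : L = fun ω => ℓ (Y ω, h (X ω)))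
    (Δ : ℝ) (hΔ : Δ = ∫ ω, (w (X ω) * e ω / p - 1) ^ 2 ∂P)
    (hΔfin : Integrable (fun ω => (w (X ω) * e ω / p - 1) ^ 2) P)
    (lam : ℝ) (hlam : 0 < lam) :
    ∫ ω, L ω ∂P
      ≤ (∫ ω, w (X ω) * L ω * A.indicator (fun _ => (1 : ℝ)) ω ∂P) / p
        + lam * Δ + M ^ 2 / (16 * lam) := by
  exact aux16 P X U Y hX hU hY A hA p hppos e ((hX.prodMk hU).comap_le) rfl he hind
    M hM ℓ hℓm hℓ0 hℓM h hh w hwm hw0 Cw hwb hw1 L hL Δ hΔ hΔfin lam hlam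
end
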